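/- arXiv:2103.05486 — 5 statements merged into one kernel-verified Lean document; each statement's English description precedes it below -/
import Mathlib

section
/- Let M = (Q,Σ,Γ,δ,q₀,F) be a deterministic one-tape Turing machine that performs at most k computation steps on each tape cell, for a constant k. Then there exists a weight-reducing deterministic one-tape Turing machine M' with the same state set Q and working alphabet of size at most |Σ|+1 + k·|Γ|, such that M' accepts the same language as M, and there is a time- and space-preserving bijection between computations of M and computations of M'. -/
/-- A deterministic one-tape Turing machine over input alphabet `A`,
states `Q`, working alphabet `Γ`. -/
structure DTM (A Q Γ : Type*) where
  /-- embedding of input symbols into the working alphabet -/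
  embed : A → Γ
  /-- the blank symbol -/
  blank : Γ
  /-- the initial state -/
  q0 : Q
  /-- the set of final states -/
  F : Set Q
  /-- the partial transition function; `true` means a right move -/
  δ : Q → Γ → Option (Q × Γ × Bool)

/-- A configuration: current state, tape contents, head position. -/
structure TMCfg (Q Γ : Type*) where
  state : Q
  tape : ℤ → Γ
  head : ℤ

namespace DTM

variable {A Q Γ : Type*}

/-- One computation step (partial). -/
def stepCfg (M : DTM A Q Γ) (c : TMCfg Q Γ) : Option (TMCfg Q Γ) :=
  (M.δ c.state (c.tape c.head)).map (fun t =>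
    ⟨t.1, Function.update c.tape c.head t.2.1,
      if t.2.2 then c.head + 1 else c.head - 1⟩)

/-- Initial tape contents on input `w`: the input occupies cells `0,…,|w|-1`,
all other cells are blank. -/
def initTape (M : DTM A Q Γ) (w : List A) : ℤ → Γ :=
  fun i => if 0 ≤ i then (w.map M.embed).getD i.toNat M.blank else M.blank

/-- The initial configuration on input `w`. -/
def initCfg (M : DTM A Q Γ) (w : List A) : TMCfg Q Γ :=
  ⟨M.q0, M.initTape w, 0⟩

/-- The configuration reached after `n` steps on input `w` (`none` if the
machine halted earlier). -/
def run (M : DTM A Q Γ) (w : List A) : ℕ → Option (TMCfg Q Γ)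
  | 0 => some (M.initCfg w)
  | n + 1 => (M.run w n).bind M.stepCfg

/-- `M` accepts `w` if its computation on `w` halts in a final state. -/
def Accepts (M : DTM A Q Γ) (w : List A) : Prop :=
  ∃ n c, M.run w n = some c ∧ M.stepCfg c = none ∧ c.state ∈ M.F

/-- The language accepted by `M`. -/
def lang (M : DTM A Q Γ) : Language A := { w | M.Accepts w }

/-- `M` is weight-reducing: there is a strict partial order on `Γ` such that
every transition rewrites the scanned symbol with a strictly smaller one. -/
def WeightReducing (M : DTM A Q Γ) : Prop :=
  ∃ lt : Γ → Γ → Prop, IsStrictOrder Γ lt ∧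
    ∀ p σ q τ d, M.δ p σ = some (q, τ, d) → lt τ σ

/-- The set of time instants at which the computation of `M` on `w` visits
(i.e. has its head scanning) the tape cell `i`. -/
def visits (M : DTM A Q Γ) (w : List A) (i : ℤ) : Set ℕ :=
  { n | ∃ c, M.run w n = some c ∧ c.head = i }

/-- The computation of `M` on `w` is infinite. -/
def InfiniteOn (M : DTM A Q Γ) (w : List A) : Prop :=
  ∀ n, (M.run w n).isSome

end DTM

/-- The set of time instants at which a computation step is performed with the
head on cell `i`. -/
def DTM.stepsAt {A Q Γ : Type*} (M : DTM A Q Γ) (w : List A) (i : ℤ) : Set ℕ :=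
  { n | ∃ c, M.run w n = some c ∧ c.head = i ∧ (M.stepCfg c).isSome }

namespace Stmt5Aux

variable {A Q Γ : Type*} {α β : Type}

/-- Decoding the augmented alphabet back to `Γ`. -/
def decode (M : DTM A Q Γ) (eA : A ≃ α) (eG : Γ ≃ β) {k : ℕ} :
    α ⊕ Unit ⊕ β × Fin k → Γ
  | .inl a => M.embed (eA.symm a)
  | .inr (.inl _) => M.blank
  | .inr (.inr p) => eG.symm p.1

/-- The rank used for the weight order: fresh symbols have rank `k`,
counters have their counter value as rank. -/
def rank {k : ℕ} : α ⊕ Unit ⊕ β × Fin k → ℕ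
  | .inl _ => k
  | .inr (.inl _) => k
  | .inr (.inr p) => p.2

/-- The counter to attach to the next symbol written over `σ'`. -/
def nextCnt {k : ℕ} : α ⊕ Unit ⊕ β × Fin k → Option (Fin k)
  | .inl _ => if h : 0 < k then some ⟨k-1, by omega⟩ else none
  | .inr (.inl _) => if h : 0 < k then some ⟨k-1, by omega⟩ else none
  | .inr (.inr p) => if h : 0 < (p.2 : ℕ) then some ⟨(p.2 : ℕ)-1, by omega⟩ else none

lemma nextCnt_some_rank {k : ℕ} {σ' : α ⊕ Unit ⊕ β × Fin k} {j : Fin k}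
    (h : nextCnt σ' = some j) : (j : ℕ) + 1 = rank σ' := by
  rcases σ' with a | u | p <;> simp only [nextCnt, rank] at h ⊢ <;>
    split at h <;> simp_all
  all_goals (rename_i hpos; rw [← h]; simp; omega)

lemma nextCnt_of_rank_pos {k : ℕ} {σ' : α ⊕ Unit ⊕ β × Fin k}
    (h : 0 < rank σ') : ∃ j : Fin k, nextCnt σ' = some j := by
  rcases σ' with a | u | p <;> simp only [nextCnt, rank] at h ⊢
  · exact ⟨_, dif_pos h⟩
  · exact ⟨_, dif_pos h⟩
  · exact ⟨_, dif_pos h⟩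

/-- The weight-reducing machine. -/
def mkM' (M : DTM A Q Γ) (eA : A ≃ α) (eG : Γ ≃ β) (k : ℕ) :
    DTM A Q (α ⊕ Unit ⊕ β × Fin k) where
  embed a := .inl (eA a)
  blank := .inr (.inl ())
  q0 := M.q0
  F := M.F
  δ q σ' :=
    match M.δ q (decode M eA eG σ'), nextCnt σ' with
    | some (p, τ, d), some j => some (p, .inr (.inr (eG τ, j)), d)
    | _, _ => none

lemma mkM'_δ_none (M : DTM A Q Γ) (eA : A ≃ α) (eG : Γ ≃ β) (k : ℕ)
    (q : Q) (σ' : α ⊕ Unit ⊕ β × Fin k)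
    (h : M.δ q (decode M eA eG σ') = none) :
    (mkM' M eA eG k).δ q σ' = none := by
  simp [mkM', h]

lemma mkM'_δ_some (M : DTM A Q Γ) (eA : A ≃ α) (eG : Γ ≃ β) (k : ℕ)
    (q : Q) (σ' : α ⊕ Unit ⊕ β × Fin k) (p : Q) (τ : Γ) (d : Bool) (j : Fin k)
    (h : M.δ q (decode M eA eG σ') = some (p, τ, d)) (hj : nextCnt σ' = some j) :
    (mkM' M eA eG k).δ q σ' = some (p, .inr (.inr (eG τ, j)), d) := by
  simp [mkM', h, hj]

lemma mkM'_wr (M : DTM A Q Γ) (eA : A ≃ α) (eG : Γ ≃ β) (k : ℕ)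
    (p : Q) (σ' τ' : α ⊕ Unit ⊕ β × Fin k) (q : Q) (d : Bool)
    (h : (mkM' M eA eG k).δ p σ' = some (q, τ', d)) : rank τ' < rank σ' := by
  simp only [mkM'] at h
  rcases h1 : M.δ p (decode M eA eG σ') with _ | ⟨⟨p', τ, d'⟩⟩ <;>
    rcases h2 : nextCnt σ' with _ | j <;> rw [h1, h2] at h <;> simp_all
  have := nextCnt_some_rank h2
  rcases h with ⟨_, h, _⟩
  subst h
  show (j:ℕ) < rank σ'
  omega

end Stmt5Aux
namespace Stmt5Aux

variable {A Q Γ : Type*} {α β : Type}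

open Classical in
/-- Number of steps performed at cell `i` strictly before time `n`. -/
noncomputable def cnt (M : DTM A Q Γ) (w : List A) (i : ℤ) (n : ℕ) : ℕ :=
  ((Finset.range n).filter (fun m => m ∈ M.stepsAt w i)).card

lemma cnt_zero (M : DTM A Q Γ) (w : List A) (i : ℤ) : cnt M w i 0 = 0 := by
  simp [cnt]

open Classical in
lemma cnt_succ_of_mem (M : DTM A Q Γ) (w : List A) (i : ℤ) (n : ℕ)
    (h : n ∈ M.stepsAt w i) : cnt M w i (n + 1) = cnt M w i n + 1 := by
  classical
  simp only [cnt, Finset.range_add_one, Finset.filter_insert, if_pos h]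
  rw [Finset.card_insert_of_notMem (by simp)]

open Classical in
lemma cnt_succ_of_not_mem (M : DTM A Q Γ) (w : List A) (i : ℤ) (n : ℕ)
    (h : n ∉ M.stepsAt w i) : cnt M w i (n + 1) = cnt M w i n := by
  classical
  simp only [cnt, Finset.range_add_one, Finset.filter_insert, if_neg h]

open Classical in
lemma cnt_le (M : DTM A Q Γ) (w : List A) (i : ℤ) (n : ℕ)
    (hfin : (M.stepsAt w i).Finite) : cnt M w i n ≤ (M.stepsAt w i).ncard := by
  classical
  rw [Set.ncard_eq_toFinset_card _ hfin]
  refine Finset.card_le_card fun x hx => ?_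
  simp only [Finset.mem_filter] at hx
  simpa [Set.Finite.mem_toFinset] using hx.2

lemma cnt_lt_of_mem (M : DTM A Q Γ) (w : List A) (i : ℤ) (n : ℕ) (k : ℕ)
    (hfin : (M.stepsAt w i).Finite) (hcard : (M.stepsAt w i).ncard ≤ k)
    (h : n ∈ M.stepsAt w i) : cnt M w i n < k := by
  have h1 := cnt_succ_of_mem M w i n h
  have h2 := cnt_le M w i (n + 1) hfin
  omega

end Stmt5Aux
namespace Stmt5Aux

variable {A Q Γ : Type*} {α β : Type}

lemma decode_initTape (M : DTM A Q Γ) (eA : A ≃ α) (eG : Γ ≃ β) (k : ℕ)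
    (w : List A) (i : ℤ) :
    decode M eA eG ((mkM' M eA eG k).initTape w i) = M.initTape w i := by
  unfold DTM.initTape
  split
  · rw [List.getD_eq_getElem?_getD, List.getD_eq_getElem?_getD,
      List.getElem?_map, List.getElem?_map]
    rcases h : w[i.toNat]? with _ | a <;> simp [h, decode, mkM']
  · simp [decode, mkM']

lemma rank_initTape (M : DTM A Q Γ) (eA : A ≃ α) (eG : Γ ≃ β) (k : ℕ)
    (w : List A) (i : ℤ) :
    rank ((mkM' M eA eG k).initTape w i) = k := by
  unfold DTM.initTape
  split
  · rw [List.getD_eq_getElem?_getD, List.getElem?_map]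
    rcases h : w[i.toNat]? with _ | a <;> simp [h, rank, mkM']
  · simp [rank, mkM']

/-- The simulation invariant. -/
lemma sim (M : DTM A Q Γ) (eA : A ≃ α) (eG : Γ ≃ β) (k : ℕ)
    (hk : ∀ (w : List A) (i : ℤ),
      (M.stepsAt w i).Finite ∧ (M.stepsAt w i).ncard ≤ k)
    (w : List A) (n : ℕ) :
    (M.run w n = none ∧ (mkM' M eA eG k).run w n = none) ∨
    (∃ c c', M.run w n = some c ∧ (mkM' M eA eG k).run w n = some c' ∧
      c'.state = c.state ∧ c'.head = c.head ∧
      (∀ i, decode M eA eG (c'.tape i) = c.tape i) ∧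
      (∀ i, rank (c'.tape i) + cnt M w i n = k)) := by
  induction n with
  | zero =>
    right
    refine ⟨_, _, rfl, rfl, rfl, rfl, fun i => decode_initTape M eA eG k w i,
      fun i => ?_⟩
    rw [cnt_zero]
    exact rank_initTape M eA eG k w i
  | succ n ih =>
    rcases ih with ⟨h1, h2⟩ | ⟨c, c', hc, hc', hst, hhd, hdec, hrk⟩
    · left
      constructor <;> simp [DTM.run, h1, h2]
    · rcases hδ : M.δ c.state (c.tape c.head) with _ | ⟨⟨p, τ, d⟩⟩
      · left
        have hstep : M.stepCfg c = none := by simp [DTM.stepCfg, hδ]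
        have hδ' : (mkM' M eA eG k).δ c'.state (c'.tape c'.head) = none := by
          apply mkM'_δ_none
          rw [hst, hhd, hdec]
          exact hδ
        have hstep' : (mkM' M eA eG k).stepCfg c' = none := by
          simp [DTM.stepCfg, hδ']
        constructor <;> simp [DTM.run, hc, hc', hstep, hstep']
      · right
        have hmem : n ∈ M.stepsAt w c.head :=
          ⟨c, hc, rfl, by simp [DTM.stepCfg, hδ]⟩
        have hlt : cnt M w c.head n < k :=
          cnt_lt_of_mem M w c.head n k (hk w c.head).1 (hk w c.head).2 hmem
        have hrkh := hrk c.head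
        have hrpos : 0 < rank (c'.tape c'.head) := by
          rw [hhd]
          omega
        obtain ⟨j, hj⟩ := nextCnt_of_rank_pos hrpos
        have hjr : (j : ℕ) + 1 = rank (c'.tape c'.head) := nextCnt_some_rank hj
        have hδ' := mkM'_δ_some M eA eG k c'.state (c'.tape c'.head) p τ d j
          (by rw [hst, hhd, hdec]; exact hδ) hj
        refine ⟨⟨p, Function.update c.tape c.head τ,
            if d then c.head + 1 else c.head - 1⟩,
          ⟨p, Function.update c'.tape c.head (.inr (.inr (eG τ, j))),
            if d then c.head + 1 else c.head - 1⟩,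
          ?_, ?_, rfl, rfl, ?_, ?_⟩
        · simp [DTM.run, hc, DTM.stepCfg, hδ]
        · have hstep' : (mkM' M eA eG k).stepCfg c' =
              some ⟨p, Function.update c'.tape c.head (.inr (.inr (eG τ, j))),
                if d then c.head + 1 else c.head - 1⟩ := by
            rw [DTM.stepCfg, hδ']
            simp [hhd]
          simp [DTM.run, hc', hstep']
        · intro i
          by_cases hi : i = c.head
          · subst hi
            simp [Function.update_self, decode]
          · simp only [Function.update_apply, if_neg hi]
            exact hdec i
        · intro i
          by_cases hi : i = c.head
          · subst hi
            rw [hhd] at hjr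
            simp only [Function.update_self,
              cnt_succ_of_mem M w c.head n hmem, rank]
            omega
          · have hnm : n ∉ M.stepsAt w i := by
              rintro ⟨cc, hcc, hdd, -⟩
              rw [hc] at hcc
              exact hi (Option.some.inj hcc ▸ hdd : c.head = i).symm
            simp only [Function.update_apply, if_neg hi,
              cnt_succ_of_not_mem M w i n hnm]
            exact hrk i

end Stmt5Aux
/-- A DTM performing at most `k` steps on each tape cell can be turned into an
equivalent weight-reducing DTM with the same states, a working alphabet of size
at most `|Σ|+1+k·|Γ|`, and a time- and space-preserving correspondence between
computations. -/
theorem stmt5 {A Q Γ : Type*} [Fintype A] [Fintype Γ] (M : DTM A Q Γ) (k : ℕ)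
    (hk : ∀ (w : List A) (i : ℤ),
      (M.stepsAt w i).Finite ∧ (M.stepsAt w i).ncard ≤ k) :
    ∃ (Γ' : Type) (_ : Fintype Γ') (M' : DTM A Q Γ'),
      M'.WeightReducing ∧
      Fintype.card Γ' ≤ Fintype.card A + 1 + k * Fintype.card Γ ∧
      M'.lang = M.lang ∧
      (∀ (w : List A) (n : ℕ), (M'.run w n).isSome ↔ (M.run w n).isSome) ∧
      (∀ (w : List A) (n : ℕ) (c : TMCfg Q Γ) (c' : TMCfg Q Γ'),
        M.run w n = some c → M'.run w n = some c' → c'.head = c.head) := by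
  classical
  set eA := Fintype.equivFin A with heA
  set eG := Fintype.equivFin Γ with heG
  set M' := Stmt5Aux.mkM' M eA eG k with hM'
  have key := Stmt5Aux.sim M eA eG k hk
  -- time preservation
  have hsome : ∀ (w : List A) (n : ℕ), (M'.run w n).isSome ↔ (M.run w n).isSome := by
    intro w n
    rcases key w n with ⟨h1, h2⟩ | ⟨c, c', h1, h2, -⟩ <;> simp [hM', h1, h2]
  -- halting correspondence
  have hhalt : ∀ (w : List A) (n : ℕ) (c : TMCfg Q Γ) (c' : TMCfg Q _),
      M.run w n = some c → M'.run w n = some c' →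
      (M.stepCfg c = none ↔ M'.stepCfg c' = none) := by
    intro w n c c' hc hc'
    have h1 : M.run w (n + 1) = M.stepCfg c := by simp [DTM.run, hc]
    have h2 : M'.run w (n + 1) = M'.stepCfg c' := by simp [DTM.run, hc']
    have h3 := hsome w (n + 1)
    rw [h1, h2] at h3
    rcases hx : M.stepCfg c with _ | x <;> rcases hy : M'.stepCfg c' with _ | y <;>
      simp [hx, hy] at h3 ⊢
  -- head (space) preservation
  have hhead : ∀ (w : List A) (n : ℕ) (c : TMCfg Q Γ) (c' : TMCfg Q _),
      M.run w n = some c → M'.run w n = some c' → c'.head = c.head := by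
    intro w n c c' hc hc'
    rcases key w n with ⟨h1, -⟩ | ⟨c2, c2', h1, h2, -, hhd, -, -⟩
    · rw [h1] at hc; cases hc
    · rw [hc] at h1
      rw [hc'] at h2
      injection h1 with e1
      injection h2 with e2
      subst e1
      subst e2
      exact hhd
  -- language equality
  have hlang : M'.lang = M.lang := by
    ext w
    constructor
    · rintro ⟨n, c', hc', hstep', hF⟩
      rcases key w n with ⟨-, h2⟩ | ⟨c, c'', h1, h2, hst, -, -, -⟩
      · rw [h2] at hc'; cases hc'
      · rw [hc'] at h2
        injection h2 with e2
        subst e2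
        exact ⟨n, c, h1, (hhalt w n c c' h1 hc').mpr hstep', hst ▸ hF⟩
    · rintro ⟨n, c, hc, hstep, hF⟩
      rcases key w n with ⟨h1, -⟩ | ⟨c2, c', h1, h2, hst, -, -, -⟩
      · rw [h1] at hc; cases hc
      · rw [hc] at h1
        injection h1 with e1
        subst e1
        refine ⟨n, c', h2, (hhalt w n c c' hc h2).mp hstep, ?_⟩
        show c'.state ∈ M.F
        rw [hst]
        exact hF
  refine ⟨Fin (Fintype.card A) ⊕ Unit ⊕ Fin (Fintype.card Γ) × Fin k,
    inferInstance, M', ?_, ?_, hlang, hsome, hhead⟩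
  · refine ⟨fun x y => Stmt5Aux.rank x < Stmt5Aux.rank y,
      { toIrrefl := ⟨fun a => Nat.lt_irrefl _⟩,
        toIsTrans := ⟨fun a b c => Nat.lt_trans⟩ },
      fun p σ q τ d h => Stmt5Aux.mkM'_wr M eA eG k p σ τ q d h⟩
  · simp only [Fintype.card_sum, Fintype.card_prod, Fintype.card_fin,
      Fintype.card_unit]
    rw [mul_comm]
    omega
end

section
/- For every n ≥ 0, every deterministic finite automaton accepting the language B_n has at least 2^{2^n} states, where B_n over alphabet {0,1,$} consists of the strings v₁$v₂$...$v_k with k > 2, vᵢ ∈ {0,1}*, |v_k| ≤ n, |vᵢ| ≥ |v_k| for all i < k, and v_j = v_k for some j < k. -/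
/-- The language `Bₙ` over `{0,1,$}` (here `$` is `none` and a bit `b` is
`some b`): strings `v₁$v₂$⋯$v_k` with `k > 2`, `|v_k| ≤ n`, `|vᵢ| ≥ |v_k|`
for `i < k`, and `v_j = v_k` for some `j < k`. -/
def Bn (n : ℕ) : Set (List (Option Bool)) :=
  { w | ∃ vs : List (List Bool), 2 < vs.length ∧
      w = List.intercalate [(none : Option Bool)] (vs.map (fun v => v.map some)) ∧
      ∃ h : vs ≠ [],
        (vs.getLast h).length ≤ n ∧
        (∀ v ∈ vs.dropLast, (vs.getLast h).length ≤ v.length) ∧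
        vs.getLast h ∈ vs.dropLast }

/-- A decoder splitting a word at `none` separators. -/
def decB : List (Option Bool) → List (List Bool)
  | [] => [[]]
  | none :: t => [] :: decB t
  | some b :: t =>
    match decB t with
    | [] => [[b]]
    | h :: t' => (b :: h) :: t'

lemma decB_map_some (v : List Bool) : decB (v.map some) = [v] := by
  induction v with
  | nil => rfl
  | cons b t ih => simp [decB, ih]

lemma decB_block (v : List Bool) (r : List (Option Bool)) :
    decB (v.map some ++ none :: r) = v :: decB r := by
  induction v with
  | nil => rfl
  | cons b t ih => simp [decB, ih]

lemma intercalate_cons_cons (a b : List Bool) (l : List (List Bool)) :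
    List.intercalate [(none : Option Bool)] ((a :: b :: l).map (fun v => v.map some)) =
      a.map some ++ none ::
        List.intercalate [(none : Option Bool)] ((b :: l).map (fun v => v.map some)) := by
  simp [List.intercalate]

lemma decB_intercalate : ∀ vs : List (List Bool), vs ≠ [] →
    decB (List.intercalate [(none : Option Bool)] (vs.map (fun v => v.map some))) = vs := by
  intro vs
  induction vs with
  | nil => simp
  | cons a t ih =>
    intro _
    cases t with
    | nil => simpa [List.intercalate] using decB_map_some a
    | cons b l =>
      rw [intercalate_cons_cons, decB_block, ih (by simp)]

lemma intercalate_injective (vs ws : List (List Bool)) (hvs : vs ≠ []) (hws : ws ≠ [])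
    (h : List.intercalate [(none : Option Bool)] (vs.map (fun v => v.map some)) =
      List.intercalate [(none : Option Bool)] (ws.map (fun v => v.map some))) : vs = ws := by
  have := congrArg decB h
  rwa [decB_intercalate vs hvs, decB_intercalate ws hws] at this

lemma intercalate_concat (xs : List (List Bool)) (hxs : xs ≠ []) (y : List Bool) :
    List.intercalate [(none : Option Bool)] ((xs ++ [y]).map (fun v => v.map some)) =
      List.intercalate [(none : Option Bool)] (xs.map (fun v => v.map some))
        ++ none :: y.map some := by
  induction xs with
  | nil => simp at hxs
  | cons a t ih =>
    cases t with
    | nil => simp [List.intercalate]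
    | cons b l =>
      have h1 := intercalate_cons_cons a b (l ++ [y])
      simp only [List.cons_append] at h1 ⊢
      rw [h1, ← List.cons_append, ih (by simp), intercalate_cons_cons]
      simp

/-- The encoding of a finite set of words of length `n`. -/
noncomputable def encB (n : ℕ) (T : Finset (Fin n → Bool)) : List (List Bool) :=
  List.replicate (n + 1) false :: List.replicate (n + 1) false ::
    (T.toList.map List.ofFn)

lemma encB_ne_nil (n : ℕ) (T : Finset (Fin n → Bool)) : encB n T ≠ [] := by
  simp [encB]

/-- The word associated to a finite set of words of length `n`. -/
noncomputable def wB (n : ℕ) (T : Finset (Fin n → Bool)) : List (Option Bool) :=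
  List.intercalate [(none : Option Bool)] ((encB n T).map (fun v => v.map some))

lemma mem_Bn_iff (n : ℕ) (T : Finset (Fin n → Bool)) (f : Fin n → Bool) :
    wB n T ++ none :: (List.ofFn f).map some ∈ Bn n ↔ f ∈ T := by
  constructor
  · rintro ⟨vs, hlen, heq, hne, -, -, hmem⟩
    have heq' : vs = encB n T ++ [List.ofFn f] := by
      apply intercalate_injective _ _ hne (by simp)
      rw [← heq, wB, intercalate_concat _ (encB_ne_nil n T)]
    subst heq'
    rw [List.getLast_append] at hmem
    rw [List.dropLast_concat] at hmem
    simp only [encB, List.mem_cons, List.mem_map] at hmem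
    rcases hmem with h | h | ⟨g, hg, hgf⟩
    · exact absurd (congrArg List.length h) (by simp)
    · exact absurd (congrArg List.length h) (by simp)
    · rwa [← List.ofFn_injective hgf, ← Finset.mem_toList]
  · intro hf
    refine ⟨encB n T ++ [List.ofFn f], by simp [encB], ?_, by simp, ?_, ?_, ?_⟩
    · rw [wB, intercalate_concat _ (encB_ne_nil n T)]
    · rw [List.getLast_append]; simp
    · rw [List.getLast_append, List.dropLast_concat]
      intro v hv
      simp only [encB, List.mem_cons, List.mem_map] at hv
      rcases hv with h | h | ⟨g, -, h⟩ <;> subst h <;> simp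
    · rw [List.getLast_append, List.dropLast_concat]
      simp only [encB, List.mem_cons, List.mem_map]
      exact Or.inr (Or.inr ⟨f, Finset.mem_toList.2 hf, rfl⟩)

/-- Every DFA accepting `Bₙ` has at least `2^(2^n)` states. -/
theorem stmt9 (n : ℕ) (S : Type*) [Fintype S] (dfa : DFA (Option Bool) S)
    (hacc : ∀ w : List (Option Bool), w ∈ dfa.accepts ↔ w ∈ Bn n) :
    2 ^ (2 ^ n) ≤ Fintype.card S := by
  have hinj : Function.Injective (fun T : Finset (Fin n → Bool) => dfa.eval (wB n T)) := by
    intro T₁ T₂ h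
    by_contra hne
    have : ∃ f, (f ∈ T₁ ∧ f ∉ T₂) ∨ (f ∈ T₂ ∧ f ∉ T₁) := by
      by_contra hc
      push_neg at hc
      exact hne (Finset.ext fun f => ⟨(hc f).1, (hc f).2⟩)
    obtain ⟨f, hf⟩ := this
    have key : ∀ T : Finset (Fin n → Bool),
        (wB n T ++ none :: (List.ofFn f).map some ∈ dfa.accepts) ↔ f ∈ T := by
      intro T; rw [hacc]; exact mem_Bn_iff n T f
    have heval : wB n T₁ ++ none :: (List.ofFn f).map some ∈ dfa.accepts ↔
        wB n T₂ ++ none :: (List.ofFn f).map some ∈ dfa.accepts := by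
      simp only [DFA.mem_accepts, DFA.eval, DFA.evalFrom_of_append]
      simp only [DFA.eval] at h
      rw [h]
    rw [key, key] at heval
    rcases hf with ⟨h1, h2⟩ | ⟨h1, h2⟩
    · exact h2 (heval.1 h1)
    · exact h2 (heval.2 h1)
  calc 2 ^ (2 ^ n) = Fintype.card (Finset (Fin n → Bool)) := by
        simp [Fintype.card_finset]
    _ ≤ Fintype.card S := Fintype.card_le_of_injective _ hinj
end

section
/- Let M be a weight-reducing deterministic one-tape Turing machine. If a computation of M visits two distinct initially-blank tape cells, both located on the same side of the initial segment, in exactly the same (time-ordered) sequence of states, then that computation is infinite. -/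
section Aux

variable {A Q Γ : Type*} {M : DTM A Q Γ} {w : List A} {s a b : ℤ} {g : ℕ → ℕ}

lemma run_succ_eq (n : ℕ) : M.run w (n+1) = (M.run w n).bind M.stepCfg := rfl

lemma run_zero_eq : M.run w 0 = some (M.initCfg w) := rfl

lemma run_succ_elim {n : ℕ} {c' : TMCfg Q Γ} (h : M.run w (n+1) = some c') :
    ∃ c, M.run w n = some c ∧ M.stepCfg c = some c' := by
  rw [run_succ_eq] at h
  cases hn : M.run w n with
  | none => rw [hn] at h; simp at h
  | some c => rw [hn] at h; exact ⟨c, rfl, h⟩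

lemma stepCfg_elim {c c' : TMCfg Q Γ} (h : M.stepCfg c = some c') :
    ∃ q τ d, M.δ c.state (c.tape c.head) = some (q, τ, d) ∧
      c' = ⟨q, Function.update c.tape c.head τ, if d then c.head + 1 else c.head - 1⟩ := by
  cases hδ : M.δ c.state (c.tape c.head) with
  | none => simp [DTM.stepCfg, hδ] at h
  | some tr =>
    obtain ⟨q, τ, d⟩ := tr
    refine ⟨q, τ, d, rfl, ?_⟩
    simp [DTM.stepCfg, hδ] at h
    exact h.symm

lemma head_succ {n : ℕ} {c c' : TMCfg Q Γ} (h : M.run w n = some c)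
    (h' : M.run w (n+1) = some c') : c'.head = c.head + 1 ∨ c'.head = c.head - 1 := by
  obtain ⟨cp, hcp, hstep⟩ := run_succ_elim h'
  rw [h] at hcp; injection hcp with h2; subst h2
  obtain ⟨q, τ, d, hδ, rfl⟩ := stepCfg_elim hstep
  cases d
  · exact Or.inr (by simp)
  · exact Or.inl (by simp)

lemma run_isSome_of_le {m n : ℕ} (h : m ≤ n) (hn : (M.run w n).isSome) :
    (M.run w m).isSome := by
  induction n with
  | zero => have h0 : m = 0 := Nat.le_zero.mp h; subst h0; exact hn
  | succ n ih =>
    by_cases hm : m = n + 1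
    · subst hm; exact hn
    · have hm' : m ≤ n := by omega
      apply ih hm'
      rw [run_succ_eq] at hn
      cases hrn : M.run w n with
      | none => rw [hrn] at hn; simp at hn
      | some c => rfl

lemma run_some_of_le {n : ℕ} {c : TMCfg Q Γ} (h : M.run w n = some c) {m : ℕ} (hm : m ≤ n) :
    ∃ c', M.run w m = some c' := by
  have := run_isSome_of_le hm (by rw [h]; rfl)
  exact Option.isSome_iff_exists.mp this

lemma abs_head_le : ∀ {n : ℕ} {c : TMCfg Q Γ}, M.run w n = some c → |c.head| ≤ (n : ℤ) := by
  intro n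
  induction n with
  | zero =>
    intro c hc
    rw [run_zero_eq] at hc; injection hc with h; subst h
    simp [DTM.initCfg]
  | succ n ih =>
    intro c hc
    obtain ⟨cp, hcp, _⟩ := run_succ_elim hc
    have h1 := ih hcp
    have h2 := head_succ hcp hc
    rw [abs_le] at h1 ⊢
    push_cast
    push_cast at h1
    rcases h2 with h | h <;> omega

lemma tape_stable {t t' : ℕ} (htt : t ≤ t') {c : TMCfg Q Γ} (h : M.run w t = some c) {x : ℤ}
    (hx : ∀ v, t ≤ v → v < t' → ∀ cv : TMCfg Q Γ, M.run w v = some cv → cv.head ≠ x) :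
    ∀ c', M.run w t' = some c' → c'.tape x = c.tape x := by
  induction t', htt using Nat.le_induction with
  | base =>
    intro c' h'
    rw [h] at h'; injection h' with h2; rw [h2]
  | succ n hn ih =>
    intro c' h'
    obtain ⟨cp, hcp, hstep⟩ := run_succ_elim h'
    have hne : cp.head ≠ x := hx n hn (Nat.lt_succ_self n) cp hcp
    obtain ⟨q, τ, d, hδ, rfl⟩ := stepCfg_elim hstep
    show Function.update cp.tape cp.head τ x = c.tape x
    rw [Function.update_of_ne (Ne.symm hne)]
    exact ih (fun v h1 h2 => hx v h1 (h2.trans (Nat.lt_succ_self n))) cp hcp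

lemma cross_eq {s x y z : ℤ} (hs : s = 1 ∨ s = -1) (h1 : s * x < s * y) (h2 : s * y ≤ s * z)
    (hz : z = x + 1 ∨ z = x - 1) : z = y := by
  rcases hs with rfl | rfl <;> omega

lemma greatest_below (P : ℕ → Prop) :
    ∀ t, (∃ v, v < t ∧ P v) → ∃ p, p < t ∧ P p ∧ ∀ v, p < v → v < t → ¬ P v := by
  intro t
  induction t with
  | zero => rintro ⟨v, hv, _⟩; exact absurd hv (Nat.not_lt_zero v)
  | succ t ih =>
    rintro ⟨v, hv, hPv⟩
    by_cases hPt : P t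
    · exact ⟨t, Nat.lt_succ_self t, hPt, fun v h1 h2 => absurd h2 (by omega)⟩
    · have hvt : v < t := by
        rcases Nat.lt_succ_iff_lt_or_eq.mp hv with h | h
        · exact h
        · subst h; contradiction
      obtain ⟨p, h1, h2, h3⟩ := ih ⟨v, hvt, hPv⟩
      refine ⟨p, h1.trans (Nat.lt_succ_self t), h2, fun v hv1 hv2 => ?_⟩
      rcases Nat.lt_succ_iff_lt_or_eq.mp hv2 with h | h
      · exact h3 v hv1 h
      · subst h; exact hPt

lemma head_lt_of_no_visit (hs : s = 1 ∨ s = -1) {y : ℤ} {t₀ t : ℕ} (ht : t₀ ≤ t)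
    (hstart : ∀ c : TMCfg Q Γ, M.run w t₀ = some c → s * c.head < s * y)
    (hnov : ∀ v, t₀ < v → v ≤ t → v ∉ M.visits w y) :
    ∀ c : TMCfg Q Γ, M.run w t = some c → s * c.head < s * y := by
  induction t, ht using Nat.le_induction with
  | base => exact hstart
  | succ n hn ih =>
    intro c hc
    obtain ⟨cp, hcp, _⟩ := run_succ_elim hc
    have hp := ih (fun v h1 h2 => hnov v h1 (h2.trans (Nat.le_succ n))) cp hcp
    by_contra hge
    push_neg at hge
    have hcy : c.head = y := cross_eq hs hp hge (head_succ hcp hc)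
    exact hnov (n+1) (by omega) le_rfl ⟨c, hc, hcy⟩

lemma g_next (hmono : StrictMonoOn g (M.visits w a))
    (hbij : Set.BijOn g (M.visits w a) (M.visits w b)) {t u t' : ℕ}
    (hc1 : ∀ v ∈ M.visits w a, v ≤ t → g v ≤ u)
    (hc2 : ∀ m ∈ M.visits w b, m ≤ u → ∃ n, n ∈ M.visits w a ∧ n ≤ t ∧ g n = m)
    (ht' : t' ∈ M.visits w a) (htt' : t < t')
    (hbet : ∀ v ∈ M.visits w a, t < v → v < t' → False) :
    u < g t' ∧ ∀ m ∈ M.visits w b, u < m → g t' ≤ m := by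
  constructor
  · by_contra hle
    push_neg at hle
    obtain ⟨n, hn, hnt, hgn⟩ := hc2 (g t') (hbij.mapsTo ht') hle
    have : n = t' := hmono.injOn hn ht' hgn
    omega
  · intro m hm hum
    by_contra hlt
    push_neg at hlt
    obtain ⟨n, hn, hgn⟩ := hbij.surjOn hm
    have hnt : t < n := by
      by_contra h
      push_neg at h
      have := hc1 n hn h
      omega
    have hnt' : ¬ n < t' := fun h => hbet n hn hnt h
    rcases eq_or_lt_of_le (not_lt.mp hnt') with h | h
    · rw [← h] at hgn; omega
    · have := hmono ht' hn h
      omega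

/-- The matching invariant between the computation beyond cell `a` and
the computation beyond cell `b`. -/
def KeyInv (M : DTM A Q Γ) (w : List A) (s a b : ℤ) (g : ℕ → ℕ) (t u : ℕ) : Prop :=
  ∃ ct cu : TMCfg Q Γ, M.run w t = some ct ∧ M.run w u = some cu ∧
    cu.state = ct.state ∧
    s * a ≤ s * ct.head ∧
    cu.head = ct.head + (b - a) ∧
    (∀ x : ℤ, s * a ≤ s * x → cu.tape (x + (b - a)) = ct.tape x) ∧
    (∀ v ∈ M.visits w a, v ≤ t → g v ≤ u) ∧
    (∀ m ∈ M.visits w b, m ≤ u → ∃ n, n ∈ M.visits w a ∧ n ≤ t ∧ g n = m)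

lemma keyInv_progress (hs : s = 1 ∨ s = -1)
    (hmono : StrictMonoOn g (M.visits w a))
    (hbij : Set.BijOn g (M.visits w a) (M.visits w b))
    (hstates : ∀ n ∈ M.visits w a,
      (M.run w (g n)).map TMCfg.state = (M.run w n).map TMCfg.state)
    {t u t' : ℕ} (hk : KeyInv M w s a b g t u) (htt' : t < t')
    {ct' : TMCfg Q Γ} (hrt' : M.run w t' = some ct') (hreg' : s * a ≤ s * ct'.head)
    (hmid : ∀ v, t < v → v < t' → ∀ c : TMCfg Q Γ, M.run w v = some c → s * c.head < s * a) :
    ∃ u', KeyInv M w s a b g t' u' := by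
  obtain ⟨ct, cu, hct, hcu, hqeq, hreg, hhd, htp, hcnt1, hcnt2⟩ := hk
  -- the step at time t
  obtain ⟨c1, hc1run⟩ := run_some_of_le hrt' (show t + 1 ≤ t' by omega)
  obtain ⟨cA, hcA, hstepA⟩ := run_succ_elim hc1run
  rw [hct] at hcA; injection hcA with hcA'; subst hcA'
  obtain ⟨q, τ, d, hδ, hc1def⟩ := stepCfg_elim hstepA
  -- the corresponding step at time u
  have hscan : cu.tape cu.head = ct.tape ct.head := by
    rw [hhd]; exact htp ct.head hreg
  have hδu : M.δ cu.state (cu.tape cu.head) = some (q, τ, d) := by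
    rw [hqeq, hscan]; exact hδ
  set cu1 : TMCfg Q Γ :=
    ⟨q, Function.update cu.tape cu.head τ, if d then cu.head + 1 else cu.head - 1⟩ with hcu1def
  have hstepu : M.stepCfg cu = some cu1 := by
    simp [DTM.stepCfg, hδu, hcu1def]
  have hu1run : M.run w (u+1) = some cu1 := by
    rw [run_succ_eq, hcu]; exact hstepu
  have hhd1 : cu1.head = c1.head + (b - a) := by
    rw [hc1def, hcu1def]
    cases d <;> simp <;> rw [hhd] <;> ring
  have hq1 : cu1.state = c1.state := by rw [hc1def, hcu1def]
  have htp1 : ∀ x : ℤ, s * a ≤ s * x → cu1.tape (x + (b - a)) = c1.tape x := by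
    intro x hx
    rw [hc1def, hcu1def]
    show Function.update cu.tape cu.head τ (x + (b-a)) = Function.update ct.tape ct.head τ x
    rcases eq_or_ne x ct.head with rfl | hne
    · rw [hhd, Function.update_self, Function.update_self]
    · rw [Function.update_of_ne hne,
        Function.update_of_ne (by rw [hhd]; intro hcon; apply hne; omega)]
      exact htp x hx
  have hsync : c1.head = a ↔ cu1.head = b := by
    constructor
    · intro h; rw [hhd1, h]; ring
    · intro h; rw [hhd1] at h; omega
  by_cases hcase : t' = t + 1
  · -- case A : consecutive step
    subst hcase
    rw [hc1run] at hrt'; injection hrt' with h2; subst h2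
    refine ⟨u + 1, c1, cu1, hc1run, hu1run, hq1, hreg', hhd1, htp1, ?_, ?_⟩
    · intro v hv hvle
      rcases Nat.lt_succ_iff_lt_or_eq.mp (Nat.lt_succ_of_le hvle) with h | h
      · exact (hcnt1 v hv (by omega)).trans (Nat.le_succ u)
      · subst h
        have hnext := g_next hmono hbij hcnt1 hcnt2 hv (by omega)
          (fun v' _ h1 h2 => by omega)
        have hc1h : c1.head = a := by
          obtain ⟨c', hc', hh'⟩ := hv
          rw [hc1run] at hc'; injection hc' with h3; subst h3; exact hh'
        have hu1vis : u + 1 ∈ M.visits w b := ⟨cu1, hu1run, hsync.mp hc1h⟩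
        exact hnext.2 (u+1) hu1vis (by omega)
    · intro m hm hmle
      rcases Nat.lt_succ_iff_lt_or_eq.mp (Nat.lt_succ_of_le hmle) with h | h
      · obtain ⟨n, hn, hnt, hgn⟩ := hcnt2 m hm (by omega)
        exact ⟨n, hn, by omega, hgn⟩
      · subst h
        have hcu1h : cu1.head = b := by
          obtain ⟨c', hc', hh'⟩ := hm
          rw [hu1run] at hc'; injection hc' with h3; subst h3; exact hh'
        have htvis : t + 1 ∈ M.visits w a := ⟨c1, hc1run, hsync.mpr hcu1h⟩
        have hnext := g_next hmono hbij hcnt1 hcnt2 htvis (by omega)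
          (fun v' _ h1 h2 => by omega)
        have := hnext.2 (u+1) ⟨cu1, hu1run, hcu1h⟩ (by omega)
        exact ⟨t+1, htvis, le_rfl, by omega⟩
  · -- case B : the head leaves the region at time t and returns at time t'
    have ht2 : t + 1 < t' := by omega
    have hlt1 : s * c1.head < s * a := hmid (t+1) (by omega) ht2 c1 hc1run
    have hcthead : ct.head = a := by
      refine cross_eq hs hlt1 hreg ?_
      rcases head_succ hct hc1run with h | h
      · right; omega
      · left; omega
    have htvis : t ∈ M.visits w a := ⟨ct, hct, hcthead⟩
    have hbet : ∀ v ∈ M.visits w a, t < v → v < t' → False := by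
      rintro v ⟨c, hc, hh⟩ h1 h2
      have hthis := hmid v h1 h2 c hc
      rw [hh] at hthis
      exact lt_irrefl _ hthis
    have ht'head : ct'.head = a := by
      obtain ⟨m, rfl⟩ : ∃ m, t' = m + 1 := ⟨t' - 1, by omega⟩
      obtain ⟨cp, hcp⟩ := run_some_of_le hrt' (Nat.le_succ m)
      have hplt := hmid m (by omega) (by omega) cp hcp
      exact cross_eq hs hplt hreg' (head_succ hcp hrt')
    have ht'vis : t' ∈ M.visits w a := ⟨ct', hrt', ht'head⟩
    obtain ⟨hgu, hleast⟩ := g_next hmono hbij hcnt1 hcnt2 ht'vis htt' hbet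
    have hu'vis : g t' ∈ M.visits w b := hbij.mapsTo ht'vis
    obtain ⟨cu'', hcu'', hu''head⟩ := hu'vis
    have hstate' : cu''.state = ct'.state := by
      have hthis := hstates t' ht'vis
      rw [hcu'', hrt'] at hthis
      simpa using hthis
    -- on the b side the head stays below b strictly between u and g t'
    have hu1lt : s * cu1.head < s * b := by
      have h' : s * cu1.head = s * c1.head + (s * b - s * a) := by rw [hhd1]; ring
      linarith
    have hubelow : ∀ v, u < v → v < g t' → ∀ c : TMCfg Q Γ, M.run w v = some c →
        s * c.head < s * b := by
      intro v hv1 hv2 c hcv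
      refine head_lt_of_no_visit hs (show u + 1 ≤ v by omega) ?_ ?_ c hcv
      · intro c0 hc0
        rw [hu1run] at hc0; injection hc0 with h3; subst h3
        exact hu1lt
      · intro v' h1 h2 hvis
        have := hleast v' hvis (by omega)
        omega
    have htp' : ∀ x : ℤ, s * a ≤ s * x → cu''.tape (x + (b - a)) = ct'.tape x := by
      intro x hx
      have hx1 : ct'.tape x = c1.tape x := by
        refine tape_stable (show t + 1 ≤ t' by omega) hc1run ?_ ct' hrt'
        intro v h1 h2 cv hcv
        have hlt := hmid v (by omega) h2 cv hcv
        intro heq; rw [heq] at hlt; linarith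
      have hx2 : cu''.tape (x + (b - a)) = cu1.tape (x + (b - a)) := by
        refine tape_stable (show u + 1 ≤ g t' by omega) hu1run ?_ cu'' hcu''
        intro v h1 h2 cv hcv
        have hlt := hubelow v (by omega) h2 cv hcv
        have hxx : s * b ≤ s * (x + (b - a)) := by
          have hexp : s * (x + (b - a)) = s * x + (s * b - s * a) := by ring
          linarith
        intro heq; rw [heq] at hlt; linarith
      rw [hx2, htp1 x hx, hx1]
    refine ⟨g t', ct', cu'', hrt', hcu'', hstate', hreg', ?_, htp', ?_, ?_⟩
    · rw [hu''head, ht'head]; ring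
    · intro v hv hvle
      rcases eq_or_lt_of_le hvle with h | h
      · subst h; exact le_rfl
      · rcases le_or_gt v t with h2 | h2
        · exact (hcnt1 v hv h2).trans (le_of_lt hgu)
        · exact absurd (hbet v hv h2 h) (fun x => x)
    · intro m hm hmle
      rcases le_or_gt m u with h2 | h2
      · obtain ⟨n, hn, hnt, hgn⟩ := hcnt2 m hm h2
        exact ⟨n, hn, by omega, hgn⟩
      · have := hleast m hm h2
        have hmeq : m = g t' := by omega
        exact ⟨t', ht'vis, le_rfl, hmeq.symm⟩

lemma keyInv_base (hs : s = 1 ∨ s = -1) (hab : s * a < s * b) (h0 : 0 ≤ s * a)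
    (hblank : ∀ x : ℤ, s * a ≤ s * x → M.initTape w x = M.blank)
    (hmono : StrictMonoOn g (M.visits w a))
    (hbij : Set.BijOn g (M.visits w a) (M.visits w b))
    (hstates : ∀ n ∈ M.visits w a,
      (M.run w (g n)).map TMCfg.state = (M.run w n).map TMCfg.state)
    {n₀ : ℕ} (hvis : n₀ ∈ M.visits w a)
    (hmin : ∀ v, v < n₀ → ∀ c : TMCfg Q Γ, M.run w v = some c → s * c.head < s * a) :
    KeyInv M w s a b g n₀ (g n₀) := by
  obtain ⟨ct, hct, hcth⟩ := hvis
  have hvis' : n₀ ∈ M.visits w a := ⟨ct, hct, hcth⟩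
  have hminA : ∀ v ∈ M.visits w a, n₀ ≤ v := by
    rintro v ⟨c, hc, hh⟩
    by_contra h
    push_neg at h
    have hthis := hmin v h c hc
    rw [hh] at hthis
    exact lt_irrefl _ hthis
  have hgvis : g n₀ ∈ M.visits w b := hbij.mapsTo hvis'
  obtain ⟨cu, hcu, hcuh⟩ := hgvis
  have hminB : ∀ m ∈ M.visits w b, g n₀ ≤ m := by
    intro m hm
    obtain ⟨n, hn, hgn⟩ := hbij.surjOn hm
    rcases eq_or_lt_of_le (hminA n hn) with h | h
    · rw [← h] at hgn; omega
    · have := hmono hvis' hn h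
      omega
  have hbelow : ∀ v, v < g n₀ → ∀ c : TMCfg Q Γ, M.run w v = some c →
      s * c.head < s * b := by
    intro v hvlt c hcv
    refine head_lt_of_no_visit hs (Nat.zero_le v) ?_ ?_ c hcv
    · intro c0 hc0
      rw [run_zero_eq] at hc0; injection hc0 with h3; subst h3
      show s * (M.initCfg w).head < s * b
      have h00 : (M.initCfg w).head = 0 := rfl
      rw [h00, mul_zero]
      linarith
    · intro v' h1 h2 hvisb
      have := hminB v' hvisb
      omega
  have hrun0 : M.run w 0 = some (M.initCfg w) := run_zero_eq
  have htp : ∀ x : ℤ, s * a ≤ s * x → cu.tape (x + (b - a)) = ct.tape x := by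
    intro x hx
    have hA : ct.tape x = (M.initCfg w).tape x := by
      refine tape_stable (Nat.zero_le n₀) hrun0 ?_ ct hct
      intro v _ h2 cv hcv
      have hlt := hmin v h2 cv hcv
      intro heq; rw [heq] at hlt; linarith
    have hB : cu.tape (x + (b - a)) = (M.initCfg w).tape (x + (b - a)) := by
      refine tape_stable (Nat.zero_le (g n₀)) hrun0 ?_ cu hcu
      intro v _ h2 cv hcv
      have hlt := hbelow v h2 cv hcv
      have hxx : s * b ≤ s * (x + (b - a)) := by
        have hexp : s * (x + (b - a)) = s * x + (s * b - s * a) := by ring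
        linarith
      intro heq; rw [heq] at hlt; linarith
    have hinit : (M.initCfg w).tape = M.initTape w := rfl
    rw [hA, hB, hinit, hblank x hx, hblank (x + (b - a)) (by
      have hexp : s * (x + (b - a)) = s * x + (s * b - s * a) := by ring
      linarith)]
  have hstq : cu.state = ct.state := by
    have hthis := hstates n₀ hvis'
    rw [hcu, hct] at hthis
    simpa using hthis
  refine ⟨ct, cu, hct, hcu, hstq, by rw [hcth], by rw [hcuh, hcth]; ring, htp, ?_, ?_⟩
  · intro v hv hvle
    have h1 := hminA v hv
    have h2 : v = n₀ := by omega
    subst h2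
    exact le_rfl
  · intro m hm hmle
    have := hminB m hm
    have hme : m = g n₀ := by omega
    exact ⟨n₀, hvis', le_rfl, hme.symm⟩

lemma keyInv_total (hs : s = 1 ∨ s = -1) (hab : s * a < s * b) (h0 : 0 ≤ s * a)
    (hblank : ∀ x : ℤ, s * a ≤ s * x → M.initTape w x = M.blank)
    (hmono : StrictMonoOn g (M.visits w a))
    (hbij : Set.BijOn g (M.visits w a) (M.visits w b))
    (hstates : ∀ n ∈ M.visits w a,
      (M.run w (g n)).map TMCfg.state = (M.run w n).map TMCfg.state) :
    ∀ t, ∀ c : TMCfg Q Γ, M.run w t = some c → s * a ≤ s * c.head →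
      ∃ u, KeyInv M w s a b g t u := by
  intro t
  induction t using Nat.strong_induction_on with
  | _ t ih =>
    intro c hc hreg
    by_cases hprev : ∃ v, v < t ∧ ∃ cv : TMCfg Q Γ, M.run w v = some cv ∧ s * a ≤ s * cv.head
    · obtain ⟨p, hpt, hPp, hmax⟩ := greatest_below
        (fun v => ∃ cv : TMCfg Q Γ, M.run w v = some cv ∧ s * a ≤ s * cv.head) t hprev
      obtain ⟨cp, hcp, hcpreg⟩ := hPp
      obtain ⟨u, hku⟩ := ih p hpt cp hcp hcpreg
      refine keyInv_progress hs hmono hbij hstates hku hpt hc hreg ?_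
      intro v h1 h2 cv hcv
      by_contra h
      push_neg at h
      exact hmax v h1 h2 ⟨cv, hcv, h⟩
    · have hmin : ∀ v, v < t → ∀ cv : TMCfg Q Γ, M.run w v = some cv →
          s * cv.head < s * a := by
        intro v hv cv hcv
        by_contra h
        push_neg at h
        exact hprev ⟨v, hv, cv, hcv, h⟩
      have hthead : c.head = a := by
        cases t with
        | zero =>
          rw [run_zero_eq] at hc; injection hc with h3; subst h3
          show (M.initCfg w).head = a
          have h00 : (M.initCfg w).head = 0 := rfl
          rw [h00] at hreg ⊢
          rw [mul_zero] at hreg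
          rcases hs with rfl | rfl <;> omega
        | succ t'' =>
          obtain ⟨cp, hcp, _⟩ := run_succ_elim hc
          have hlt := hmin t'' (Nat.lt_succ_self t'') cp hcp
          exact cross_eq hs hlt hreg (head_succ hcp hc)
      exact ⟨g t, keyInv_base hs hab h0 hblank hmono hbij hstates ⟨c, hc, hthead⟩ hmin⟩

lemma main_lemma (M : DTM A Q Γ) (w : List A) (s a b : ℤ) (g : ℕ → ℕ)
    (hs : s = 1 ∨ s = -1) (hab : s * a < s * b) (h0 : 0 ≤ s * a)
    (hblank : ∀ x : ℤ, s * a ≤ s * x → M.initTape w x = M.blank)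
    (hvisited : (M.visits w a).Nonempty)
    (hmono : StrictMonoOn g (M.visits w a))
    (hbij : Set.BijOn g (M.visits w a) (M.visits w b))
    (hstates : ∀ n ∈ M.visits w a,
      (M.run w (g n)).map TMCfg.state = (M.run w n).map TMCfg.state) :
    M.InfiniteOn w := by
  have hd1 : 1 ≤ s * b - s * a := by
    have := Int.add_one_le_iff.mpr hab
    linarith
  have hreach : ∀ k : ℕ, ∃ t, ∃ c : TMCfg Q Γ, M.run w t = some c ∧
      c.head = a + (k : ℤ) * (b - a) := by
    intro k
    induction k with
    | zero =>
      obtain ⟨n, hn⟩ := hvisited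
      obtain ⟨c, hc, hh⟩ := hn
      exact ⟨n, c, hc, by rw [hh]; push_cast; ring⟩
    | succ k ihk =>
      obtain ⟨t, c, hc, hh⟩ := ihk
      have hknn : (0:ℤ) ≤ (k:ℤ) := Int.natCast_nonneg k
      have hprod : 0 ≤ (k:ℤ) * (s * b - s * a) := mul_nonneg hknn (by linarith)
      have hreg : s * a ≤ s * c.head := by
        have he : s * c.head = s * a + (k:ℤ) * (s * b - s * a) := by rw [hh]; ring
        linarith
      obtain ⟨u, hku⟩ := keyInv_total hs hab h0 hblank hmono hbij hstates t c hc hreg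
      obtain ⟨ct, cu, hct, hcu, _, _, hhd, _, _, _⟩ := hku
      rw [hc] at hct; injection hct with h3; subst h3
      refine ⟨u, cu, hcu, ?_⟩
      rw [hhd, hh]; push_cast; ring
  intro n
  obtain ⟨t, c, hc, hh⟩ := hreach n
  have h1 : (n : ℤ) ≤ s * c.head := by
    have he : s * c.head = s * a + (n:ℤ) * (s * b - s * a) := by rw [hh]; ring
    have hn1 : (n:ℤ) * 1 ≤ (n:ℤ) * (s * b - s * a) :=
      mul_le_mul_of_nonneg_left hd1 (Int.natCast_nonneg n)
    linarith
  have h2 : s * c.head ≤ |c.head| := by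
    rcases hs with rfl | rfl
    · rw [one_mul]; exact le_abs_self _
    · rw [neg_one_mul]; exact neg_le_abs _
  have h3 := abs_head_le hc
  have h4 : n ≤ t := by exact_mod_cast h1.trans (h2.trans h3)
  exact run_isSome_of_le h4 (by rw [hc]; rfl)

lemma swap_g {c₁ c₂ : ℤ} (hmono : StrictMonoOn g (M.visits w c₁))
    (hbij : Set.BijOn g (M.visits w c₁) (M.visits w c₂))
    (hstates : ∀ n ∈ M.visits w c₁,
      (M.run w (g n)).map TMCfg.state = (M.run w n).map TMCfg.state) :
    ∃ g' : ℕ → ℕ, StrictMonoOn g' (M.visits w c₂) ∧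
      Set.BijOn g' (M.visits w c₂) (M.visits w c₁) ∧
      ∀ n ∈ M.visits w c₂,
        (M.run w (g' n)).map TMCfg.state = (M.run w n).map TMCfg.state := by
  classical
  set g' := Function.invFunOn g (M.visits w c₁) with hg'
  have hinv : Set.InvOn g' g (M.visits w c₁) (M.visits w c₂) := hbij.invOn_invFunOn
  have hbij' : Set.BijOn g' (M.visits w c₂) (M.visits w c₁) := Set.BijOn.symm hinv.symm hbij
  refine ⟨g', ?_, hbij', ?_⟩
  · intro m₁ hm₁ m₂ hm₂ hlt
    have e₁ : g (g' m₁) = m₁ := hinv.2 hm₁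
    have e₂ : g (g' m₂) = m₂ := hinv.2 hm₂
    have h₁ : g' m₁ ∈ M.visits w c₁ := hbij'.mapsTo hm₁
    have h₂ : g' m₂ ∈ M.visits w c₁ := hbij'.mapsTo hm₂
    by_contra h
    push_neg at h
    rcases eq_or_lt_of_le h with he | he
    · rw [← he] at e₁; omega
    · have := hmono h₂ h₁ he
      omega
  · intro m hm
    have h1 : g' m ∈ M.visits w c₁ := hbij'.mapsTo hm
    have hthis := hstates _ h1
    rw [hinv.2 hm] at hthis
    exact hthis.symm

end Aux

/-- If a computation of a weight-reducing DTM visits two distinct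
initially-blank cells on the same side of the initial segment in the same
time-ordered sequence of states (witnessed by an order-preserving bijection
`g` between the visit times that matches the states), then the computation is
infinite. -/
theorem stmt14 {A Q Γ : Type*} (M : DTM A Q Γ) (hwr : M.WeightReducing)
    (w : List A) (c₁ c₂ : ℤ) (hne : c₁ ≠ c₂)
    (hside : (c₁ < 0 ∧ c₂ < 0) ∨ ((w.length : ℤ) ≤ c₁ ∧ (w.length : ℤ) ≤ c₂))
    (hvisited : (M.visits w c₁).Nonempty)
    (g : ℕ → ℕ)
    (hmono : StrictMonoOn g (M.visits w c₁))
    (hbij : Set.BijOn g (M.visits w c₁) (M.visits w c₂))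
    (hstates : ∀ n ∈ M.visits w c₁,
      (M.run w (g n)).map TMCfg.state = (M.run w n).map TMCfg.state) :
    M.InfiniteOn w := by
  rcases hside with ⟨h1, h2⟩ | ⟨h1, h2⟩
  · -- left side, use s = -1
    have hblank : ∀ c : ℤ, c < 0 → ∀ x : ℤ, (-1) * c ≤ (-1) * x →
        M.initTape w x = M.blank := by
      intro c hcneg x hx
      simp only [DTM.initTape]
      rw [if_neg (by omega)]
    rcases lt_or_gt_of_ne hne with hlt | hlt
    · obtain ⟨g', hmono', hbij', hstates'⟩ := swap_g hmono hbij hstates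
      obtain ⟨n, hn⟩ := hvisited
      exact main_lemma M w (-1) c₂ c₁ g' (Or.inr rfl) (by omega) (by omega)
        (hblank c₂ h2) ⟨g n, hbij.mapsTo hn⟩ hmono' hbij' hstates'
    · exact main_lemma M w (-1) c₁ c₂ g (Or.inr rfl) (by omega) (by omega)
        (hblank c₁ h1) hvisited hmono hbij hstates
  · -- right side, use s = 1
    have hblank : ∀ c : ℤ, (w.length : ℤ) ≤ c → ∀ x : ℤ, 1 * c ≤ 1 * x →
        M.initTape w x = M.blank := by
      intro c hc x hx
      simp only [DTM.initTape]
      rw [if_pos (by omega)]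
      apply List.getD_eq_default
      rw [List.length_map]
      omega
    rcases lt_or_gt_of_ne hne with hlt | hlt
    · exact main_lemma M w 1 c₁ c₂ g (Or.inl rfl) (by omega) (by omega)
        (hblank c₁ h1) hvisited hmono hbij hstates
    · obtain ⟨g', hmono', hbij', hstates'⟩ := swap_g hmono hbij hstates
      obtain ⟨n, hn⟩ := hvisited
      exact main_lemma M w 1 c₂ c₁ g' (Or.inl rfl) (by omega) (by omega)
        (hblank c₂ h2) ⟨g n, hbij.mapsTo hn⟩ hmono' hbij' hstates'
end

section
/- Let M be a weight-reducing deterministic one-tape Turing machine with n states and g working symbols. A computation of M is infinite if and only if it visits at least (n+1)^g consecutive initially-blank cells on one side of the initial segment. -/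
namespace DTM

variable {A Q Γ : Type*}

/-- run from an arbitrary configuration -/
def runFrom (M : DTM A Q Γ) (c : TMCfg Q Γ) : ℕ → Option (TMCfg Q Γ)
  | 0 => some c
  | n + 1 => (M.runFrom c n).bind M.stepCfg

lemma run_eq_runFrom (M : DTM A Q Γ) (w : List A) : ∀ n, M.run w n = M.runFrom (M.initCfg w) n
  | 0 => rfl
  | n + 1 => by rw [run, runFrom, run_eq_runFrom M w n]

/-- total run: stays put when halted -/
def runT (M : DTM A Q Γ) (c : TMCfg Q Γ) : ℕ → TMCfg Q Γ
  | 0 => c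
  | n + 1 => (M.stepCfg (M.runT c n)).getD (M.runT c n)

def posT (M : DTM A Q Γ) (c : TMCfg Q Γ) (t : ℕ) : ℤ := (M.runT c t).head
def stT (M : DTM A Q Γ) (c : TMCfg Q Γ) (t : ℕ) : Q := (M.runT c t).state
def tpT (M : DTM A Q Γ) (c : TMCfg Q Γ) (t : ℕ) : ℤ → Γ := (M.runT c t).tape

lemma runFrom_none_succ (M : DTM A Q Γ) (c : TMCfg Q Γ) {n : ℕ}
    (h : M.runFrom c n = none) : M.runFrom c (n+1) = none := by
  rw [runFrom, h]; rfl

lemma runFrom_isSome_of_le (M : DTM A Q Γ) (c : TMCfg Q Γ) {m n : ℕ} (h : m ≤ n)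
    (hn : (M.runFrom c n).isSome) : (M.runFrom c m).isSome := by
  by_contra hm
  have : M.runFrom c m = none := by
    cases hh : M.runFrom c m with
    | none => rfl
    | some _ => rw [hh] at hm; simp at hm
  have : ∀ k, M.runFrom c (m + k) = none := by
    intro k; induction k with
    | zero => exact this
    | succ k ih => exact M.runFrom_none_succ c (n := m + k) ih
  have := this (n - m)
  rw [Nat.add_sub_cancel' h] at this
  rw [this] at hn; simp at hn

lemma runFrom_eq_runT (M : DTM A Q Γ) (c : TMCfg Q Γ) : ∀ n, (M.runFrom c n).isSome →
    M.runFrom c n = some (M.runT c n)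
  | 0, _ => rfl
  | n + 1, h => by
    have hn : (M.runFrom c n).isSome := M.runFrom_isSome_of_le c (Nat.le_succ n) h
    have := M.runFrom_eq_runT c n hn
    rw [runFrom, this] at h ⊢
    rw [Option.bind_some] at h ⊢
    cases hs : M.stepCfg (M.runT c n) with
    | none => rw [hs] at h; simp at h
    | some d => rw [runT, hs]; simpa using hs.symm

lemma stepT_of_lt (M : DTM A Q Γ) (c : TMCfg Q Γ) {s T : ℕ} (hs : (M.runFrom c T).isSome)
    (h : s < T) : M.stepCfg (M.runT c s) = some (M.runT c (s+1)) := by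
  have h1 : (M.runFrom c (s+1)).isSome := M.runFrom_isSome_of_le c h hs
  have h0 : (M.runFrom c s).isSome := M.runFrom_isSome_of_le c (Nat.le_succ s) h1
  have e1 := M.runFrom_eq_runT c (s+1) h1
  have e0 := M.runFrom_eq_runT c s h0
  rw [runFrom, e0] at e1
  rwa [Option.bind_some] at e1

lemma runT_frozen (M : DTM A Q Γ) (c : TMCfg Q Γ) {T : ℕ}
    (hh : M.stepCfg (M.runT c T) = none) : ∀ t, T ≤ t → M.runT c t = M.runT c T := by
  intro t ht
  obtain ⟨k, rfl⟩ := Nat.exists_eq_add_of_le ht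
  induction k with
  | zero => rfl
  | succ k ih => rw [← Nat.add_assoc, runT, ih (Nat.le_add_right _ _), hh]; rfl

/-- data of a successful step -/
lemma step_data (M : DTM A Q Γ) (c : TMCfg Q Γ) {s : ℕ} {d : TMCfg Q Γ}
    (h : M.stepCfg (M.runT c s) = some d) :
    ∃ q τ dir, M.δ (M.stT c s) (M.tpT c s (M.posT c s)) = some (q, τ, dir) ∧
      M.stT c (s+1) = q ∧ M.tpT c (s+1) = Function.update (M.tpT c s) (M.posT c s) τ ∧
      M.posT c (s+1) = (if dir then M.posT c s + 1 else M.posT c s - 1) := by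
  have hrt : M.runT c (s+1) = d := by rw [runT, h]; rfl
  unfold stepCfg at h
  cases hδ : M.δ (M.runT c s).state ((M.runT c s).tape (M.runT c s).head) with
  | none => rw [hδ] at h; simp at h
  | some t =>
    rw [hδ] at h
    simp only [Option.map_some] at h
    obtain ⟨q, τ, dir⟩ := t
    have hd : d = ⟨q, Function.update (M.runT c s).tape (M.runT c s).head τ,
        if dir then (M.runT c s).head + 1 else (M.runT c s).head - 1⟩ :=
      (Option.some_inj.mp h).symm
    subst hd
    exact ⟨q, τ, dir, hδ, by simp [stT, hrt], by simp [tpT, posT, hrt], by simp [posT, hrt]⟩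

lemma tpT_succ_of_ne (M : DTM A Q Γ) (c : TMCfg Q Γ) (s : ℕ) {x : ℤ} (hx : x ≠ M.posT c s) :
    M.tpT c (s+1) x = M.tpT c s x := by
  cases h : M.stepCfg (M.runT c s) with
  | none => simp only [tpT, runT, h, Option.getD_none]
  | some d =>
    obtain ⟨q, τ, dir, _, _, htp, _⟩ := M.step_data c h
    rw [htp, Function.update_apply, if_neg hx]

lemma tpT_persist (M : DTM A Q Γ) (c : TMCfg Q Γ) (y : ℤ) (t1 : ℕ) : ∀ t2, t1 ≤ t2 →
    (∀ s, t1 ≤ s → s < t2 → M.posT c s ≠ y) → M.tpT c t2 y = M.tpT c t1 y := by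
  intro t2
  induction t2 with
  | zero => intro h _; rw [Nat.le_zero.mp h]
  | succ t2 ih =>
    intro h hs
    rcases Nat.lt_or_ge t1 (t2+1) with h' | h'
    · have ht : t1 ≤ t2 := Nat.lt_succ_iff.mp h'
      rw [M.tpT_succ_of_ne c t2 (fun hx => hs t2 ht (Nat.lt_succ_self t2) hx.symm)]
      exact ih ht (fun s h1 h2 => hs s h1 (Nat.lt_succ_of_lt h2))
    · have : t1 = t2 + 1 := le_antisymm h h'
      rw [this]

lemma posT_adj (M : DTM A Q Γ) (c : TMCfg Q Γ) (s : ℕ) :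
    M.posT c (s+1) = M.posT c s ∨ M.posT c (s+1) = M.posT c s + 1 ∨
      M.posT c (s+1) = M.posT c s - 1 := by
  cases h : M.stepCfg (M.runT c s) with
  | none => left; simp only [posT, runT, h, Option.getD_none]
  | some d =>
    obtain ⟨q, τ, dir, _, _, _, hp⟩ := M.step_data c h
    cases dir with
    | true => right; left; simpa using hp
    | false => right; right; simpa using hp

lemma posT_le (M : DTM A Q Γ) (c : TMCfg Q Γ) : ∀ t, M.posT c t ≤ c.head + t := by
  intro t
  induction t with
  | zero => simp [posT, runT]
  | succ t ih =>
    rcases M.posT_adj c t with h | h | h <;> rw [h] <;> push_cast <;> omega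

/-- crossing: discrete IVT upward -/
lemma posT_ivt_up (M : DTM A Q Γ) (c : TMCfg Q Γ) (b : ℤ) (hb : M.posT c 0 ≤ b) :
    ∀ t, b ≤ M.posT c t → ∃ s, s ≤ t ∧ M.posT c s = b := by
  intro t
  induction t with
  | zero => intro h; exact ⟨0, le_refl 0, le_antisymm hb h⟩
  | succ t ih =>
    intro h
    rcases Nat.lt_or_ge (M.posT c t).toNat 0 with _ | _
    · omega
    rcases le_or_gt b (M.posT c t) with h' | h'
    · obtain ⟨s, hs, he⟩ := ih h'; exact ⟨s, Nat.le_succ_of_le hs, he⟩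
    · rcases M.posT_adj c t with ha | ha | ha <;>
        exact ⟨t+1, le_refl _, by omega⟩

lemma posT_ivt_down (M : DTM A Q Γ) (c : TMCfg Q Γ) (b : ℤ) (hb : b ≤ M.posT c 0) :
    ∀ t, M.posT c t ≤ b → ∃ s, s ≤ t ∧ M.posT c s = b := by
  intro t
  induction t with
  | zero => intro h; exact ⟨0, le_refl 0, le_antisymm h hb⟩
  | succ t ih =>
    intro h
    rcases le_or_gt (M.posT c t) b with h' | h'
    · obtain ⟨s, hs, he⟩ := ih h'; exact ⟨s, Nat.le_succ_of_le hs, he⟩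
    · rcases M.posT_adj c t with ha | ha | ha <;>
        exact ⟨t+1, le_refl _, by omega⟩

/-- states of visits to cell `b` at times in `[s, s+k)` -/
def visitsFrom (M : DTM A Q Γ) (c : TMCfg Q Γ) (b : ℤ) : ℕ → ℕ → List Q
  | _, 0 => []
  | s, k + 1 =>
      (if M.posT c s = b then [M.stT c s] else []) ++ M.visitsFrom c b (s+1) k

/-- symbols scanned at visits to cell `b` at times in `[s, s+k)` -/
def symsFrom (M : DTM A Q Γ) (c : TMCfg Q Γ) (b : ℤ) : ℕ → ℕ → List Γ
  | _, 0 => []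
  | s, k + 1 =>
      (if M.posT c s = b then [M.tpT c s b] else []) ++ M.symsFrom c b (s+1) k

/-- times in `[s, s+k)` at which the head moves from `b` to `b+1` -/
def entryTimesFrom (M : DTM A Q Γ) (c : TMCfg Q Γ) (b : ℤ) : ℕ → ℕ → List ℕ
  | _, 0 => []
  | s, k + 1 =>
      (if M.posT c s = b ∧ M.posT c (s+1) = b + 1 then [s] else []) ++
        M.entryTimesFrom c b (s+1) k

/-- abstract right-entry states computed from a visit-state sequence -/
def entriesOf (M : DTM A Q Γ) : Γ → List Q → List Q
  | _, [] => []
  | σ, q :: qs =>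
    match M.δ q σ with
    | none => []
    | some (q', τ, dir) => (if dir then [q'] else []) ++ M.entriesOf τ qs

lemma mem_entryTimesFrom (M : DTM A Q Γ) (c : TMCfg Q Γ) (b : ℤ) :
    ∀ k s u, u ∈ M.entryTimesFrom c b s k ↔
      (s ≤ u ∧ u < s + k ∧ M.posT c u = b ∧ M.posT c (u+1) = b + 1) := by
  intro k
  induction k with
  | zero => intro s u; simp [entryTimesFrom]; omega
  | succ k ih =>
    intro s u
    rw [entryTimesFrom, List.mem_append, ih (s+1)]
    constructor
    · rintro (h | ⟨h1, h2, h3⟩)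
      · split at h
        · rename_i hc
          simp at h
          exact ⟨le_of_eq h.symm, by omega, h ▸ hc.1, h ▸ hc.2⟩
        · simp at h
      · exact ⟨by omega, by omega, h3⟩
    · rintro ⟨h1, h2, h3, h4⟩
      rcases eq_or_lt_of_le h1 with rfl | h1'
      · left; simp [h3, h4]
      · right; exact ⟨h1', by omega, h3, h4⟩

lemma sorted_entryTimesFrom (M : DTM A Q Γ) (c : TMCfg Q Γ) (b : ℤ) :
    ∀ k s, List.Pairwise (· < ·) (M.entryTimesFrom c b s k) := by
  intro k
  induction k with
  | zero => intro s; simp [entryTimesFrom]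
  | succ k ih =>
    intro s
    rw [entryTimesFrom]
    split
    · rw [List.singleton_append, List.pairwise_cons]
      refine ⟨fun u hu => ?_, ih (s+1)⟩
      exact lt_of_lt_of_le (Nat.lt_succ_self s) ((M.mem_entryTimesFrom c b k (s+1) u).mp hu).1
    · simpa using ih (s+1)

lemma mem_visitsFromn (M : DTM A Q Γ) (c : TMCfg Q Γ) (b : ℤ) :
    ∀ k s t, s ≤ t → t < s + k → M.posT c t = b → M.visitsFrom c b s k ≠ [] := by
  intro k
  induction k with
  | zero => intro s t h1 h2; omega
  | succ k ih =>
    intro s t h1 h2 h3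
    rw [visitsFrom]
    rcases eq_or_lt_of_le h1 with rfl | h1'
    · simp [h3]
    · intro hc
      rcases List.append_eq_nil_iff.mp hc with ⟨_, h5⟩
      exact ih (s+1) t h1' (by omega) h3 h5

lemma length_visitsFrom_eq_symsFrom (M : DTM A Q Γ) (c : TMCfg Q Γ) (b : ℤ) :
    ∀ k s, (M.visitsFrom c b s k).length = (M.symsFrom c b s k).length := by
  intro k
  induction k with
  | zero => intro s; rfl
  | succ k ih =>
    intro s
    rw [visitsFrom, symsFrom, List.length_append, List.length_append, ih (s+1)]
    congr 1
    split <;> rfl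

lemma symsFrom_nonempty (M : DTM A Q Γ) (c : TMCfg Q Γ) (b : ℤ) :
    ∀ k s, M.symsFrom c b s k ≠ [] → ∃ t, s ≤ t ∧ t < s + k ∧ M.posT c t = b := by
  intro k
  induction k with
  | zero => intro s h; exact absurd rfl h
  | succ k ih =>
    intro s h
    rw [symsFrom] at h
    by_cases hp : M.posT c s = b
    · exact ⟨s, le_refl s, by omega, hp⟩
    · rw [if_neg hp, List.nil_append] at h
      obtain ⟨t, h1, h2, h3⟩ := ih (s+1) h
      exact ⟨t, by omega, by omega, h3⟩

lemma symsFrom_head? (M : DTM A Q Γ) (c : TMCfg Q Γ) (b : ℤ) :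
    ∀ k s x, (M.symsFrom c b s k).head? = some x → x = M.tpT c s b := by
  intro k
  induction k with
  | zero => intro s x h; simp [symsFrom] at h
  | succ k ih =>
    intro s x h
    rw [symsFrom] at h
    by_cases hp : M.posT c s = b
    · rw [if_pos hp, List.singleton_append, List.head?_cons] at h
      exact Option.some_inj.mp h.symm
    · rw [if_neg hp, List.nil_append] at h
      rw [ih (s+1) x h, M.tpT_succ_of_ne c s (fun hb => hp hb.symm)]

lemma chain'_symsFrom (M : DTM A Q Γ) (c : TMCfg Q Γ) {T : ℕ}
    (hs : (M.runFrom c T).isSome) {lt : Γ → Γ → Prop}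
    (hδ : ∀ p σ q τ d, M.δ p σ = some (q, τ, d) → lt τ σ) (b : ℤ) :
    ∀ k s, s + k ≤ T + 1 → List.IsChain (fun a b => lt b a) (M.symsFrom c b s k) := by
  intro k
  induction k with
  | zero => intro s _; simp [symsFrom]
  | succ k ih =>
    intro s hk
    rw [symsFrom]
    by_cases hp : M.posT c s = b
    · rw [if_pos hp, List.singleton_append, List.isChain_cons]
      refine ⟨fun y hy => ?_, ih (s+1) (by omega)⟩
      have hy' := M.symsFrom_head? c b k (s+1) y hy
      have hne : M.symsFrom c b (s+1) k ≠ [] := by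
        intro hnil; rw [hnil] at hy; simp at hy
      obtain ⟨t, h1, h2, _⟩ := M.symsFrom_nonempty c b k (s+1) hne
      have hsT : s < T := by omega
      obtain ⟨q, τ, dir, hδeq, _, htp, _⟩ := M.step_data c (M.stepT_of_lt c hs hsT)
      have : M.tpT c (s+1) b = τ := by rw [htp, ← hp, Function.update_self]
      rw [hy', this]
      rw [hp] at hδeq
      exact hδ _ _ _ _ _ hδeq
    · rw [if_neg hp, List.nil_append]
      exact ih (s+1) (by omega)

lemma length_visitsFrom_le [Fintype Γ] (M : DTM A Q Γ) (c : TMCfg Q Γ) {T : ℕ}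
    (hs : (M.runFrom c T).isSome) (hwr : M.WeightReducing) (b : ℤ) :
    (M.visitsFrom c b 0 (T+1)).length ≤ Fintype.card Γ := by
  obtain ⟨lt, hso, hδ⟩ := hwr
  haveI : IsTrans Γ lt := hso.toIsTrans
  haveI : IsIrrefl Γ lt := ⟨hso.toIrrefl.irrefl⟩
  haveI h1 : IsTrans Γ (fun a b => lt b a) := ⟨fun a b c h1 h2 => Trans.trans h2 h1⟩
  haveI h2 : IsIrrefl Γ (fun a b => lt b a) := ⟨fun a h => irrefl a h⟩
  have hch := M.chain'_symsFrom c hs hδ b (T+1) 0 (by omega)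
  have hpw := List.isChain_iff_pairwise.mp hch
  have hnd : (M.symsFrom c b 0 (T+1)).Nodup := hpw.nodup
  rw [M.length_visitsFrom_eq_symsFrom c b]
  exact hnd.length_le_card

lemma entry_states_eq (M : DTM A Q Γ) (c : TMCfg Q Γ) {T : ℕ}
    (hs : (M.runFrom c T).isSome) (hh : M.stepCfg (M.runT c T) = none) (b : ℤ) :
    ∀ k s, s + k = T + 1 →
      (M.entryTimesFrom c b s (k-1)).map (fun t => M.stT c (t+1)) =
        M.entriesOf (M.tpT c s b) (M.visitsFrom c b s k) := by
  intro k
  induction k with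
  | zero => intro s _; rfl
  | succ k ih =>
    intro s hk
    cases k with
    | zero =>
      -- s = T
      have hsT : s = T := by omega
      subst hsT
      simp only [Nat.add_sub_cancel, entryTimesFrom, visitsFrom, List.map_nil]
      by_cases hp : M.posT c s = b
      · rw [if_pos hp]
        have hδ : M.δ (M.stT c s) (M.tpT c s b) = none := by
          rw [← hp]
          unfold stepCfg at hh
          exact Option.map_eq_none_iff.mp hh
        simp only [List.singleton_append, entriesOf, hδ]
      · rw [if_neg hp, List.nil_append, entriesOf]
    | succ k' =>
      have hsT : s < T := by omega
      obtain ⟨q, τ, dir, hδeq, hst, htp, hpos⟩ := M.step_data c (M.stepT_of_lt c hs hsT)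
      have hunf1 : M.entryTimesFrom c b s (k'+1) =
          (if M.posT c s = b ∧ M.posT c (s+1) = b + 1 then [s] else []) ++
            M.entryTimesFrom c b (s+1) k' := rfl
      have hIH := ih (s+1) (by omega)
      simp only [Nat.add_sub_cancel] at hIH ⊢
      rw [hunf1, visitsFrom, List.map_append]
      by_cases hp : M.posT c s = b
      · rw [hp] at hδeq
        have htpb : M.tpT c (s+1) b = τ := by rw [htp, ← hp, Function.update_self]
        rw [if_pos hp, List.singleton_append, entriesOf, hδeq]
        have hdir : (M.posT c s = b ∧ M.posT c (s+1) = b + 1) ↔ dir = true := by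
          constructor
          · intro ⟨_, h2⟩
            by_contra hd
            rw [hpos, if_neg hd] at h2; omega
          · intro hd; rw [hpos, if_pos hd]; exact ⟨hp, by rw [hp]⟩
        rw [htpb] at hIH
        rw [hIH]
        cases dir with
        | true =>
          rw [if_pos (hdir.mpr rfl)]
          simp [hst]
        | false =>
          rw [if_neg (fun hc => Bool.false_ne_true (hdir.mp hc))]
          simp
      · have htpb : M.tpT c (s+1) b = M.tpT c s b :=
          M.tpT_succ_of_ne c s (fun hb => hp hb.symm)
        have hnd : ¬(M.posT c s = b ∧ M.posT c (s+1) = b + 1) := fun hc => hp hc.1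
        rw [if_neg hnd, if_neg hp]
        simp only [List.map_nil, List.nil_append]
        rw [hIH, htpb]

/-- the inner simulation lemma: matched excursions at two boundaries -/
lemma inner (M : DTM A Q Γ) (c : TMCfg Q Γ) {T : ℕ}
    (hs : (M.runFrom c T).isSome) (hh : M.stepCfg (M.runT c T) = none)
    {b b' : ℤ} {u u' : ℕ} (huT : u < T) (hu'T : u' < T)
    (hpu1 : M.posT c (u+1) = b+1) (hpu1' : M.posT c (u'+1) = b'+1)
    (hst : M.stT c (u+1) = M.stT c (u'+1))
    (htp : ∀ x : ℤ, 0 < x → M.tpT c (u+1) (b+x) = M.tpT c (u'+1) (b'+x)) :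
    ∀ j, u+1+j ≤ T → (∀ i, i < j → b < M.posT c (u+1+i)) →
      u'+1+j ≤ T ∧ (∀ i, i < j → b' < M.posT c (u'+1+i)) ∧
      M.stT c (u+1+j) = M.stT c (u'+1+j) ∧
      M.posT c (u'+1+j) = M.posT c (u+1+j) + (b'-b) ∧
      ∀ x : ℤ, 0 < x → M.tpT c (u+1+j) (b+x) = M.tpT c (u'+1+j) (b'+x) := by
  intro j
  induction j with
  | zero =>
    intro _ _
    exact ⟨by omega, by omega, hst, by rw [hpu1, hpu1']; ring, htp⟩
  | succ j ih =>
    intro hT halive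
    obtain ⟨h1, h2, h3, h4, h5⟩ := ih (by omega) (fun i hi => halive i (by omega))
    set t := u+1+j with hteq
    set t' := u'+1+j with ht'eq
    have htT : t < T := by omega
    have hbt : b < M.posT c t := halive j (Nat.lt_succ_self j)
    set x₀ : ℤ := M.posT c t - b with hx0
    have hx0pos : 0 < x₀ := by omega
    have hptx : M.posT c t = b + x₀ := by omega
    have hpt'x : M.posT c t' = b' + x₀ := by omega
    obtain ⟨q, τ, dir, hδeq, hstq, htpq, hposq⟩ := M.step_data c (M.stepT_of_lt c hs htT)
    -- the scanned symbols agree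
    have hscan : M.tpT c t (M.posT c t) = M.tpT c t' (M.posT c t') := by
      rw [hptx, hpt'x]; exact h5 x₀ hx0pos
    -- step at t' is defined with the same transition
    have hδeq' : M.δ (M.stT c t') (M.tpT c t' (M.posT c t')) = some (q, τ, dir) := by
      rw [← h3, ← hscan]; exact hδeq
    have ht'T : t' < T := by
      rcases Nat.lt_or_ge t' T with h | h
      · exact h
      · exfalso
        have ht'T : t' = T := by omega
        rw [ht'T] at hδeq'
        unfold stepCfg at hh
        unfold stT tpT posT at hδeq'
        rw [Option.map_eq_none_iff.mp hh] at hδeq'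
        simp at hδeq'
    obtain ⟨q2, τ2, dir2, hδeq2, hstq2, htpq2, hposq2⟩ :=
      M.step_data c (M.stepT_of_lt c hs ht'T)
    rw [hδeq'] at hδeq2
    injection hδeq2 with hinj
    rw [Prod.mk.injEq, Prod.mk.injEq] at hinj
    obtain ⟨rfl, rfl, rfl⟩ := hinj
    have hteq1 : u+1+(j+1) = t+1 := by omega
    have ht'eq1 : u'+1+(j+1) = t'+1 := by omega
    rw [hteq1, ht'eq1]
    refine ⟨by omega, ?_, ?_, ?_, ?_⟩
    · intro i hi
      rcases Nat.lt_or_ge i j with h | h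
      · exact h2 i h
      · have : i = j := by omega
        rw [this, ← ht'eq, hpt'x]; omega
    · rw [hstq, hstq2]
    · rw [hposq, hposq2, hptx, hpt'x]
      by_cases hd : dir = true <;> simp [hd] <;> ring
    · intro x hx
      rw [htpq, htpq2, hptx, hpt'x]
      by_cases hxx : x = x₀
      · rw [hxx, Function.update_self, Function.update_self]
      · rw [Function.update_of_ne (by omega), Function.update_of_ne (by omega)]
        exact h5 x hx

lemma entry_props (M : DTM A Q Γ) (c : TMCfg Q Γ) {T : ℕ} {b : ℤ} {m : ℕ} {u : ℕ}
    (hu : (M.entryTimesFrom c b 0 T)[m]? = some u) :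
    u < T ∧ M.posT c u = b ∧ M.posT c (u+1) = b + 1 := by
  have := (M.mem_entryTimesFrom c b T 0 u).mp (List.mem_of_getElem? hu)
  exact ⟨by omega, this.2.2⟩

lemma sorted_getElem?_lt {L : List ℕ} (hst : List.Pairwise (· < ·) L) {m m' : ℕ} {u w : ℕ}
    (hu : L[m]? = some u) (hw : L[m']? = some w) (hmm : m < m') : u < w := by
  obtain ⟨h1, e1⟩ := List.getElem?_eq_some_iff.mp hu
  obtain ⟨h2, e2⟩ := List.getElem?_eq_some_iff.mp hw
  rw [← e1, ← e2]
  exact List.pairwise_iff_getElem.mp hst m m' h1 h2 hmm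

lemma between_entries {L : List ℕ} (hst : List.Pairwise (· < ·) L) {m : ℕ} {u w z : ℕ}
    (hu : L[m]? = some u) (hw : L[m+1]? = some w) (hz : z ∈ L) (hzw : z < w) : z ≤ u := by
  obtain ⟨k, hk, ek⟩ := List.mem_iff_getElem.mp hz
  obtain ⟨h1, e1⟩ := List.getElem?_eq_some_iff.mp hu
  obtain ⟨h2, e2⟩ := List.getElem?_eq_some_iff.mp hw
  rcases Nat.lt_or_ge k (m+1) with h | h
  · rcases Nat.lt_or_ge k m with h' | h'
    · have := List.pairwise_iff_getElem.mp hst k m hk h1 h'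
      omega
    · have : k = m := by omega
      subst this; omega
  · exfalso
    rcases Nat.eq_or_lt_of_le h with rfl | h'
    · rw [e2] at ek; omega
    · have := List.pairwise_iff_getElem.mp hst (m+1) k h2 hk h'
      omega

/-- excursion decomposition: every time strictly right of `b` belongs to an excursion -/
lemma decomp (M : DTM A Q Γ) (c : TMCfg Q Γ) {T : ℕ} {b : ℤ} (hhead : c.head ≤ b)
    {t : ℕ} (htT : t ≤ T) (hpt : b < M.posT c t) :
    ∃ u j, u ∈ M.entryTimesFrom c b 0 T ∧ t = u+1+j ∧ ∀ i, i ≤ j → b < M.posT c (u+1+i) := by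
  classical
  have hP0 : M.posT c 0 ≤ b := hhead
  obtain ⟨u, hu⟩ : ∃ u, Nat.findGreatest (fun s => M.posT c s ≤ b) t = u := ⟨_, rfl⟩
  have hPu : M.posT c u ≤ b := by
    have := Nat.findGreatest_spec (P := fun s => M.posT c s ≤ b) (Nat.zero_le t) hP0
    rw [hu] at this
    exact this
  have hule : u ≤ t := hu ▸ Nat.findGreatest_le t
  have hgr : ∀ k, u < k → k ≤ t → ¬ (M.posT c k ≤ b) := by
    intro k h1 h2
    have := Nat.findGreatest_is_greatest (P := fun s => M.posT c s ≤ b) (hu ▸ h1) h2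
    exact this
  have hut : u < t := by
    rcases Nat.eq_or_lt_of_le hule with rfl | h
    · omega
    · exact h
  have hpu1 : b < M.posT c (u+1) := by
    have := hgr (u+1) (Nat.lt_succ_self u) hut
    omega
  have hadj := M.posT_adj c u
  have hpub : M.posT c u = b ∧ M.posT c (u+1) = b + 1 := by omega
  refine ⟨u, t - u - 1, ?_, by omega, ?_⟩
  · exact (M.mem_entryTimesFrom c b T 0 u).mpr ⟨Nat.zero_le u, by omega, hpub.1, hpub.2⟩
  · intro i hi
    have h1 : u < u+1+i := by omega
    have h2 : u+1+i ≤ t := by omega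
    have := hgr (u+1+i) h1 h2
    omega

/-- outer induction: the `m`-th entries into the two right regions match -/
lemma outer (M : DTM A Q Γ) (c : TMCfg Q Γ) {T : ℕ}
    (hs : (M.runFrom c T).isSome) (hh : M.stepCfg (M.runT c T) = none)
    {i₀ b b' : ℤ} (hblank : ∀ x, i₀ ≤ x → c.tape x = M.blank) (hhead : c.head ≤ i₀)
    (hb : i₀ ≤ b) (hb' : i₀ ≤ b')
    (hE : (M.entryTimesFrom c b 0 T).map (fun t => M.stT c (t+1)) =
          (M.entryTimesFrom c b' 0 T).map (fun t => M.stT c (t+1))) :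
    ∀ (m u u' : ℕ), (M.entryTimesFrom c b 0 T)[m]? = some u →
      (M.entryTimesFrom c b' 0 T)[m]? = some u' →
      M.stT c (u+1) = M.stT c (u'+1) ∧
      ∀ x : ℤ, 0 < x → M.tpT c (u+1) (b+x) = M.tpT c (u'+1) (b'+x) := by
  have hhb : c.head ≤ b := le_trans hhead hb
  have hhb' : c.head ≤ b' := le_trans hhead hb'
  intro m
  induction m with
  | zero =>
    intro u u' hu hu'
    constructor
    · have := congrArg (fun L : List Q => L[0]?) hE
      simp only [List.getElem?_map, hu, hu', Option.map_some] at this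
      exact Option.some_inj.mp this
    · -- both regions are still blank at the respective first entries
      intro x hx
      have hfirst : ∀ (bb : ℤ), i₀ ≤ bb → ∀ (v : ℕ),
          (M.entryTimesFrom c bb 0 T)[0]? = some v →
          M.tpT c (v+1) (bb+x) = M.blank := by
        intro bb hbb v hv
        obtain ⟨hvT, hpv, _⟩ := M.entry_props c hv
        have hper : M.tpT c (v+1) (bb+x) = M.tpT c 0 (bb+x) := by
          apply M.tpT_persist c (bb+x) 0 (v+1) (Nat.zero_le _)
          intro s _ hsv hps
          have hsb : bb < M.posT c s := by rw [hps]; omega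
          have hsT : s ≤ T := by omega
          obtain ⟨u₂, j₂, hmem, heq, _⟩ := M.decomp c (le_trans hhead hbb) hsT hsb
          obtain ⟨k, hk, ek⟩ := List.mem_iff_getElem.mp hmem
          have hvu₂ : v ≤ u₂ := by
            obtain ⟨h0, e0⟩ := List.getElem?_eq_some_iff.mp hv
            rcases Nat.eq_or_lt_of_le (Nat.zero_le k) with rfl | hk0
            · rw [← ek, ← e0]
            · have := List.pairwise_iff_getElem.mp
                (M.sorted_entryTimesFrom c bb T 0) 0 k h0 hk hk0
              rw [e0, ek] at this
              omega
          omega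
        rw [hper]
        have : M.tpT c 0 = c.tape := rfl
        rw [this]
        exact hblank (bb+x) (by omega)
      rw [hfirst b hb u hu, hfirst b' hb' u' hu']
  | succ m ih =>
    intro w w' hw hw'
    have hstw : M.stT c (w+1) = M.stT c (w'+1) := by
      have := congrArg (fun L : List Q => L[m+1]?) hE
      simp only [List.getElem?_map, hw, hw', Option.map_some] at this
      exact Option.some_inj.mp this
    refine ⟨hstw, ?_⟩
    -- previous entries
    have hlen : (M.entryTimesFrom c b 0 T).length = (M.entryTimesFrom c b' 0 T).length := by
      have := congrArg List.length hE
      simpa using this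
    obtain ⟨hwlen, _⟩ := List.getElem?_eq_some_iff.mp hw
    obtain ⟨hwlen', _⟩ := List.getElem?_eq_some_iff.mp hw'
    obtain ⟨u, hu⟩ : ∃ u, (M.entryTimesFrom c b 0 T)[m]? = some u :=
      ⟨_, List.getElem?_eq_some_iff.mpr ⟨by omega, rfl⟩⟩
    obtain ⟨u', hu'⟩ : ∃ u', (M.entryTimesFrom c b' 0 T)[m]? = some u' :=
      ⟨_, List.getElem?_eq_some_iff.mpr ⟨by omega, rfl⟩⟩
    obtain ⟨hstm, htpm⟩ := ih u u' hu hu'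
    obtain ⟨huT, hpu, hpu1⟩ := M.entry_props c hu
    obtain ⟨hu'T, hpu', hpu1'⟩ := M.entry_props c hu'
    obtain ⟨hwT, hpw, hpw1⟩ := M.entry_props c hw
    obtain ⟨hw'T, hpw', hpw1'⟩ := M.entry_props c hw'
    have huw : u < w := sorted_getElem?_lt (M.sorted_entryTimesFrom c b T 0) hu hw (Nat.lt_succ_self m)
    have hu'w' : u' < w' := sorted_getElem?_lt (M.sorted_entryTimesFrom c b' T 0) hu' hw' (Nat.lt_succ_self m)
    -- first return of excursion m at b
    classical
    have hex : ∃ j, M.posT c (u+1+j) ≤ b := ⟨w - u - 1, by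
      have : u+1+(w-u-1) = w := by omega
      rw [this, hpw]⟩
    obtain ⟨ℓ, hℓeq⟩ : ∃ ℓ, Nat.find hex = ℓ := ⟨_, rfl⟩
    have hℓ : M.posT c (u+1+ℓ) ≤ b := hℓeq ▸ Nat.find_spec hex
    have hmin : ∀ i, i < ℓ → b < M.posT c (u+1+i) := by
      intro i hi
      have := Nat.find_min hex (hℓeq ▸ hi)
      omega
    have hvw : u+1+ℓ ≤ w := by
      have : ℓ ≤ w - u - 1 := hℓeq ▸ Nat.find_min' hex (by
        have : u+1+(w-u-1) = w := by omega
        rw [this, hpw])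
      omega
    have hℓpos : 0 < ℓ := by
      rcases Nat.eq_or_lt_of_le (Nat.zero_le ℓ) with h0 | h
      · exfalso; rw [← h0] at hℓ; simp at hℓ; rw [hpu1] at hℓ; omega
      · exact h
    have hposv : M.posT c (u+1+ℓ) = b := by
      have hprev : b < M.posT c (u+1+(ℓ-1)) := hmin (ℓ-1) (by omega)
      have hadj := M.posT_adj c (u+1+(ℓ-1))
      have he2 : u+1+(ℓ-1)+1 = u+1+ℓ := by omega
      rw [he2] at hadj
      omega
    -- apply inner simulation up to the first return
    have hinner := M.inner c hs hh huT hu'T hpu1 hpu1' hstm htpm ℓ (by omega) hmin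
    obtain ⟨hv'T, halive', hstv, hposv', htpv⟩ := hinner
    have hposv'b : M.posT c (u'+1+ℓ) = b' := by rw [hposv', hposv]; ring
    -- v' ≤ w'
    have hv'w' : u'+1+ℓ ≤ w' := by
      by_contra hcon
      have hi : w' - u' - 1 < ℓ := by omega
      have := halive' (w' - u' - 1) hi
      have heq : u'+1+(w'-u'-1) = w' := by omega
      rw [heq, hpw'] at this
      omega
    -- persistence on the b side
    have hperb : ∀ (bb : ℤ) (uu ww ℓℓ : ℕ), i₀ ≤ bb → uu < T →
        (M.entryTimesFrom c bb 0 T)[m]? = some uu →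
        (M.entryTimesFrom c bb 0 T)[m+1]? = some ww →
        M.posT c (uu+1+ℓℓ) = bb → uu+1+ℓℓ ≤ ww →
        ∀ x : ℤ, 0 < x → M.tpT c (ww+1) (bb+x) = M.tpT c (uu+1+ℓℓ) (bb+x) := by
      intro bb uu ww ℓℓ hbb huuT huu hww hpvv hvvww x hx
      obtain ⟨hwwT, hpww, _⟩ := M.entry_props c hww
      apply M.tpT_persist c (bb+x) (uu+1+ℓℓ) (ww+1) (by omega)
      intro s hs1 hs2 hps
      have hsb : bb < M.posT c s := by rw [hps]; omega
      have hsT : s ≤ T := by omega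
      obtain ⟨u₂, j₂, hmem, heqs, hins⟩ := M.decomp c (le_trans hhead hbb) hsT hsb
      have hu₂w : u₂ < ww := by omega
      have hu₂u : u₂ ≤ uu := between_entries (M.sorted_entryTimesFrom c bb T 0) huu hww hmem hu₂w
      -- the return time uu+1+ℓℓ lies inside the excursion of u₂ : contradiction
      have : ∃ i, i ≤ j₂ ∧ uu+1+ℓℓ = u₂+1+i := ⟨uu+1+ℓℓ-u₂-1, by omega, by omega⟩
      obtain ⟨i, hij, hieq⟩ := this
      have := hins i hij
      rw [← hieq, hpvv] at this
      omega
    have hpb := hperb b u w ℓ hb huT hu hw hposv hvw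
    have hpb' := hperb b' u' w' ℓ hb' hu'T hu' hw' hposv'b hv'w'
    intro x hx
    rw [hpb x hx, hpb' x hx]
    exact htpv x hx

/-- visited-cell transfer between two boundaries with equal visit sequences -/
lemma transfer (M : DTM A Q Γ) (c : TMCfg Q Γ) {T : ℕ}
    (hs : (M.runFrom c T).isSome) (hh : M.stepCfg (M.runT c T) = none)
    {i₀ b b' : ℤ} (hblank : ∀ x, i₀ ≤ x → c.tape x = M.blank) (hhead : c.head ≤ i₀)
    (hb : i₀ ≤ b) (hb' : i₀ ≤ b')
    (hS : M.visitsFrom c b 0 (T+1) = M.visitsFrom c b' 0 (T+1)) :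
    ∀ x : ℤ, 0 < x → ∀ t, t ≤ T → M.posT c t = b + x →
      ∃ t', t' ≤ T ∧ M.posT c t' = b' + x := by
  have htp0 : M.tpT c 0 = c.tape := rfl
  have hE : (M.entryTimesFrom c b 0 T).map (fun t => M.stT c (t+1)) =
      (M.entryTimesFrom c b' 0 T).map (fun t => M.stT c (t+1)) := by
    have h1 := M.entry_states_eq c hs hh b (T+1) 0 (by omega)
    have h2 := M.entry_states_eq c hs hh b' (T+1) 0 (by omega)
    simp only [Nat.add_sub_cancel] at h1 h2
    rw [h1, h2, htp0, hblank b hb, hblank b' hb', hS]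
  intro x hx t htT hpt
  have hbt : b < M.posT c t := by omega
  obtain ⟨u, j, hmem, hteq, hins⟩ := M.decomp c (le_trans hhead hb) htT hbt
  obtain ⟨k, hk, ek⟩ := List.mem_iff_getElem.mp hmem
  have hu : (M.entryTimesFrom c b 0 T)[k]? = some u := List.getElem?_eq_some_iff.mpr ⟨hk, ek⟩
  have hlen : (M.entryTimesFrom c b 0 T).length = (M.entryTimesFrom c b' 0 T).length := by
    have := congrArg List.length hE
    simpa using this
  obtain ⟨u', hu'⟩ : ∃ u', (M.entryTimesFrom c b' 0 T)[k]? = some u' :=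
    ⟨_, List.getElem?_eq_some_iff.mpr ⟨by omega, rfl⟩⟩
  obtain ⟨hstk, htpk⟩ := M.outer c hs hh hblank hhead hb hb' hE k u u' hu hu'
  obtain ⟨huT, hpu, hpu1⟩ := M.entry_props c hu
  obtain ⟨hu'T, hpu', hpu1'⟩ := M.entry_props c hu'
  have hinner := M.inner c hs hh huT hu'T hpu1 hpu1' hstk htpk j
    (by omega) (fun i hi => hins i (by omega))
  obtain ⟨h1, _, _, h4, _⟩ := hinner
  refine ⟨u'+1+j, h1, ?_⟩
  rw [h4, ← hteq, hpt]
  ring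

lemma list_eq_of_short_ext {α : Type*} {g : ℕ} {l l' : List α}
    (h1 : l.length ≤ g) (h2 : l'.length ≤ g)
    (h : ∀ k : Fin g, l[k.1]? = l'[k.1]?) : l = l' := by
  apply List.ext_getElem?
  intro n
  rcases Nat.lt_or_ge n g with hn | hn
  · exact h ⟨n, hn⟩
  · rw [List.getElem?_eq_none (by omega), List.getElem?_eq_none (by omega)]

/-- the key contradiction: a halting run cannot visit `(|Q|+1)^|Γ|` consecutive
initially-blank cells to the right of the head start -/
lemma core [Fintype Q] [Fintype Γ] (M : DTM A Q Γ) (hwr : M.WeightReducing)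
    (c : TMCfg Q Γ) {T : ℕ}
    (hs : (M.runFrom c T).isSome) (hh : M.stepCfg (M.runT c T) = none)
    {i₀ : ℤ} (hblank : ∀ x, i₀ ≤ x → c.tape x = M.blank) (hhead : c.head ≤ i₀)
    (hvis : ∀ j : ℕ, j < (Fintype.card Q + 1) ^ (Fintype.card Γ) →
      ∃ t, t ≤ T ∧ M.posT c t = i₀ + (j : ℤ)) : False := by
  classical
  set g := Fintype.card Γ with hg
  set N := (Fintype.card Q + 1) ^ g with hN
  have hgpos : 0 < g := Fintype.card_pos_iff.mpr ⟨M.blank⟩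
  set S : ℕ → List Q := fun j => M.visitsFrom c (i₀ + j) 0 (T+1) with hSdef
  have hSlen : ∀ j : ℕ, (S j).length ≤ g := fun j => M.length_visitsFrom_le c hs hwr _
  have hSne : ∀ j : ℕ, j < N → S j ≠ [] := by
    intro j hj
    obtain ⟨t, ht, hp⟩ := hvis j hj
    exact M.mem_visitsFromn c (i₀ + j) (T+1) 0 t (Nat.zero_le t) (by omega) hp
  -- pigeonhole: two equal visit sequences
  have hcol : ∃ j j' : ℕ, j < N ∧ j' < N ∧ j ≠ j' ∧ S j = S j' := by
    by_contra hcon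
    push_neg at hcon
    set F : Option (Fin N) → (Fin g → Option Q) :=
      fun o => o.elim (fun _ => none) (fun j k => (S j.1)[k.1]?) with hF
    have hFinj : Function.Injective F := by
      intro o1 o2 he
      cases o1 with
      | none =>
        cases o2 with
        | none => rfl
        | some j =>
            exfalso
            have hne := hSne j.1 j.2
            have : (S j.1)[0]? = none := by
              have := congrFun he ⟨0, hgpos⟩
              simpa [F] using this.symm
            rw [List.getElem?_eq_none_iff] at this
            have := List.length_pos_iff.mpr hne
            omega
      | some j =>
        cases o2 with
        | none =>
            exfalso
            have hne := hSne j.1 j.2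
            have : (S j.1)[0]? = none := by
              have := congrFun he ⟨0, hgpos⟩
              simpa [F] using this
            rw [List.getElem?_eq_none_iff] at this
            have := List.length_pos_iff.mpr hne
            omega
        | some j' =>
            have hSeq : S j.1 = S j'.1 := by
              apply list_eq_of_short_ext (hSlen j.1) (hSlen j'.1)
              intro k
              have := congrFun he k
              simpa [F] using this
            by_cases hjj : j.1 = j'.1
            · exact congrArg some (Fin.ext hjj)
            · exact absurd hSeq (hcon j.1 j'.1 j.2 j'.2 hjj)
    have hcard := Fintype.card_le_of_injective F hFinj
    rw [Fintype.card_option, Fintype.card_fin, Fintype.card_fun,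
      Fintype.card_option, Fintype.card_fin] at hcard
    omega
  obtain ⟨j, j', hjN, hj'N, hjj, hSeq⟩ := hcol
  -- order them
  obtain ⟨a, a', haN, ha'N, haa, hSa⟩ : ∃ a a' : ℕ, a < N ∧ a' < N ∧ a < a' ∧ S a = S a' := by
    rcases Nat.lt_or_ge j j' with h | h
    · exact ⟨j, j', hjN, hj'N, h, hSeq⟩
    · exact ⟨j', j, hj'N, hjN, by omega, hSeq.symm⟩
  set b : ℤ := i₀ + a with hbdef
  set b' : ℤ := i₀ + a' with hb'def
  set d : ℤ := (a' : ℤ) - a with hddef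
  have hdpos : 0 < d := by simp [hddef]; omega
  have htrans := M.transfer c hs hh hblank hhead (by omega : i₀ ≤ b) (by omega : i₀ ≤ b') hSa
  -- all cells b + m*d are visited
  have hiter : ∀ m : ℕ, 1 ≤ m → ∃ t, t ≤ T ∧ M.posT c t = b + m * d := by
    intro m hm
    induction m with
    | zero => omega
    | succ m ih =>
      rcases Nat.lt_or_ge m 1 with h0 | h1
      · have : m = 0 := by omega
        subst this
        obtain ⟨t, ht, hp⟩ := hvis a' ha'N
        exact ⟨t, ht, by rw [hp, hbdef]; push_cast; ring⟩
      · obtain ⟨t, ht, hp⟩ := ih h1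
        obtain ⟨t', ht', hp'⟩ := htrans (m * d) (by positivity) t ht hp
        refine ⟨t', ht', ?_⟩
        rw [hp', hb'def, hbdef]
        push_cast
        ring
  -- contradiction with the position bound
  obtain ⟨m, hm1, hmbig⟩ : ∃ m : ℕ, 1 ≤ m ∧ c.head + T < b + m * d := by
    refine ⟨(c.head + T - b).toNat + 1, by omega, ?_⟩
    have h1 : ((c.head + T - b).toNat + 1 : ℤ) * d ≥ ((c.head + T - b).toNat + 1 : ℤ) := by
      nlinarith [hdpos]
    have h2 : ((c.head + T - b).toNat : ℤ) ≥ c.head + T - b ∨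
        ((c.head + T - b).toNat : ℤ) = 0 := by omega
    push_cast
    omega
  obtain ⟨t, htT, hpt⟩ := hiter m hm1
  have hle := M.posT_le c t
  have : M.posT c 0 = c.head := rfl
  omega

lemma length_visitsFrom_succ (M : DTM A Q Γ) (c : TMCfg Q Γ) (b : ℤ) (s k : ℕ) :
    (M.visitsFrom c b s (k+1)).length =
      (if M.posT c s = b then 1 else 0) + (M.visitsFrom c b (s+1) k).length := by
  rw [visitsFrom, List.length_append]
  congr 1
  split <;> rfl

lemma sum_counts (M : DTM A Q Γ) (c : TMCfg Q Γ) (K₂ K₁ : ℤ)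
    (hbd : ∀ t, K₂ ≤ M.posT c t ∧ M.posT c t ≤ K₁) :
    ∀ k s, ∑ b ∈ Finset.Icc K₂ K₁, (M.visitsFrom c b s k).length = k := by
  intro k
  induction k with
  | zero => intro s; simp [visitsFrom]
  | succ k ih =>
    intro s
    have : ∀ b ∈ Finset.Icc K₂ K₁, (M.visitsFrom c b s (k+1)).length =
        (if M.posT c s = b then 1 else 0) + (M.visitsFrom c b (s+1) k).length :=
      fun b _ => M.length_visitsFrom_succ c b s k
    rw [Finset.sum_congr rfl this, Finset.sum_add_distrib, ih (s+1)]
    have hmem : M.posT c s ∈ Finset.Icc K₂ K₁ := Finset.mem_Icc.mpr (hbd s)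
    rw [Finset.sum_ite_eq (Finset.Icc K₂ K₁) (M.posT c s) (fun _ => 1), if_pos hmem]
    omega

/-- mirror configuration -/
def mirrorCfg (c : TMCfg Q Γ) : TMCfg Q Γ := ⟨c.state, fun x => c.tape (-x), -c.head⟩

/-- mirror machine: all moves reversed -/
def mirrorM (M : DTM A Q Γ) : DTM A Q Γ :=
  ⟨M.embed, M.blank, M.q0, M.F, fun q σ => (M.δ q σ).map (fun t => (t.1, t.2.1, !t.2.2))⟩

lemma mirror_step (M : DTM A Q Γ) (c : TMCfg Q Γ) :
    M.mirrorM.stepCfg (mirrorCfg c) = (M.stepCfg c).map mirrorCfg := by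
  unfold stepCfg mirrorM mirrorCfg
  simp only
  rw [show (-(-c.head) : ℤ) = c.head by ring]
  cases hδ : M.δ c.state (c.tape c.head) with
  | none => simp [hδ]
  | some t =>
    obtain ⟨q, τ, dir⟩ := t
    simp only [hδ, Option.map_some]
    have htape : Function.update (fun x => c.tape (-x)) (-c.head) τ =
        fun x => Function.update c.tape c.head τ (-x) := by
      funext x
      by_cases hx : x = -c.head
      · subst hx
        rw [Function.update_self, show (-(-c.head) : ℤ) = c.head by ring, Function.update_self]
      · rw [Function.update_of_ne hx, Function.update_of_ne (by omega)]
    have hhead : (if (!dir) = true then -c.head + 1 else -c.head - 1) =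
        -(if dir = true then c.head + 1 else c.head - 1) := by
      cases dir <;> simp <;> ring
    rw [htape, hhead]

lemma mirror_runFrom (M : DTM A Q Γ) (c : TMCfg Q Γ) :
    ∀ n, M.mirrorM.runFrom (mirrorCfg c) n = (M.runFrom c n).map mirrorCfg
  | 0 => rfl
  | n + 1 => by
    rw [runFrom, runFrom, mirror_runFrom M c n]
    cases h : M.runFrom c n with
    | none => rfl
    | some d => simp [mirror_step]

lemma mirror_wr (M : DTM A Q Γ) (hwr : M.WeightReducing) : M.mirrorM.WeightReducing := by
  obtain ⟨lt, hso, hδ⟩ := hwr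
  refine ⟨lt, hso, ?_⟩
  intro p σ q τ d h
  unfold mirrorM at h
  simp only at h
  cases h' : M.δ p σ with
  | none => rw [h'] at h; simp at h
  | some t =>
    obtain ⟨q0, τ0, d0⟩ := t
    rw [h'] at h
    simp only [Option.map_some] at h
    injection h with h
    rw [Prod.mk.injEq, Prod.mk.injEq] at h
    obtain ⟨_, h2, _⟩ := h
    exact h2 ▸ hδ p σ q0 τ0 d0 h'

lemma initTape_blank (M : DTM A Q Γ) (w : List A) {x : ℤ} (hx : (w.length : ℤ) ≤ x) :
    M.initTape w x = M.blank := by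
  unfold initTape
  have h0 : (0:ℤ) ≤ x := le_trans (by positivity) hx
  rw [if_pos h0]
  apply List.getD_eq_default
  rw [List.length_map]
  omega

end DTM


open DTM

/-- A computation of a weight-reducing DTM with `n` states and `g` working
symbols is infinite iff it visits `(n+1)^g` consecutive initially-blank cells
on one side of the initial segment. -/
theorem stmt15 {A Q Γ : Type*} [Fintype Q] [Fintype Γ] (M : DTM A Q Γ)
    (hwr : M.WeightReducing) (w : List A) :
    M.InfiniteOn w ↔
      ((∀ j : ℕ, j < (Fintype.card Q + 1) ^ (Fintype.card Γ) →
          (M.visits w (-1 - (j : ℤ))).Nonempty) ∨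
       (∀ j : ℕ, j < (Fintype.card Q + 1) ^ (Fintype.card Γ) →
          (M.visits w ((w.length : ℤ) + (j : ℤ))).Nonempty)) := by
  classical
  set c0 := M.initCfg w with hc0
  have hbridge : ∀ n, M.run w n = M.runFrom c0 n := M.run_eq_runFrom w
  set g := Fintype.card Γ with hg
  set N := (Fintype.card Q + 1) ^ g with hN
  have hpos0 : M.posT c0 0 = 0 := rfl
  constructor
  · -- forward: infinite ⟹ visits all cells on one side
    intro hInf
    have hsAll : ∀ n, (M.runFrom c0 n).isSome := fun n => by
      rw [← hbridge]; exact hInf n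
    have hrunT : ∀ n, M.run w n = some (M.runT c0 n) := fun n => by
      rw [hbridge]; exact M.runFrom_eq_runT c0 n (hsAll n)
    by_cases hup : ∃ K : ℤ, ∀ t, M.posT c0 t ≤ K
    · by_cases hdn : ∃ K : ℤ, ∀ t, K ≤ M.posT c0 t
      · -- bounded: contradiction with visit counts
        exfalso
        obtain ⟨K₁, hK₁⟩ := hup
        obtain ⟨K₂, hK₂⟩ := hdn
        set C := (Finset.Icc K₂ K₁).card with hC
        set T' := C * g with hT'
        have hsum := M.sum_counts c0 K₂ K₁ (fun t => ⟨hK₂ t, hK₁ t⟩) (T'+1) 0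
        have hb : ∀ b ∈ Finset.Icc K₂ K₁, (M.visitsFrom c0 b 0 (T'+1)).length ≤ g :=
          fun b _ => M.length_visitsFrom_le c0 (hsAll T') hwr b
        have h2 : T'+1 ≤ C * g := by
          calc T'+1 = ∑ b ∈ Finset.Icc K₂ K₁, (M.visitsFrom c0 b 0 (T'+1)).length := hsum.symm
          _ ≤ ∑ _b ∈ Finset.Icc K₂ K₁, g := Finset.sum_le_sum hb
          _ = C * g := by rw [Finset.sum_const, smul_eq_mul]
        omega
      · -- unbounded below
        left
        push_neg at hdn
        intro j _
        obtain ⟨t, ht⟩ := hdn (-1 - (j:ℤ))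
        obtain ⟨s, _, hps⟩ := M.posT_ivt_down c0 (-1 - (j:ℤ))
          (by rw [hpos0]; omega) t (le_of_lt ht)
        exact ⟨s, M.runT c0 s, hrunT s, hps⟩
    · -- unbounded above
      right
      push_neg at hup
      intro j _
      obtain ⟨t, ht⟩ := hup ((w.length : ℤ) + j)
      obtain ⟨s, _, hps⟩ := M.posT_ivt_up c0 ((w.length : ℤ) + j)
        (by rw [hpos0]; positivity) t (le_of_lt ht)
      exact ⟨s, M.runT c0 s, hrunT s, hps⟩
  · -- backward: visiting N consecutive blank cells ⟹ infinite
    intro hvis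
    by_contra hInf
    unfold InfiniteOn at hInf
    push_neg at hInf
    obtain ⟨n₀, hn₀none, hn₀min⟩ :
        ∃ n₀, ¬(M.run w n₀).isSome ∧ ∀ m, m < n₀ → (M.run w m).isSome := by
      obtain ⟨n, hn⟩ := hInf
      have hex : ∃ n, ¬((M.run w n).isSome = true) := ⟨n, by simpa using hn⟩
      refine ⟨Nat.find hex, by simpa using Nat.find_spec hex, fun m hm => ?_⟩
      by_contra hc
      exact Nat.find_min hex hm (by simpa using hc)
    have hn₀pos : n₀ ≠ 0 := by
      intro h
      rw [h] at hn₀none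
      simp [run] at hn₀none
    set T := n₀ - 1 with hTdef
    have hsT : (M.runFrom c0 T).isSome := by
      rw [← hbridge]; exact hn₀min T (by omega)
    have hrT : M.run w T = some (M.runT c0 T) := by
      rw [hbridge]; exact M.runFrom_eq_runT c0 T hsT
    have hhT : M.stepCfg (M.runT c0 T) = none := by
      have h1 : M.run w (T+1) = none := by
        rw [Option.not_isSome_iff_eq_none] at hn₀none
        rw [show T+1 = n₀ by omega]
        exact hn₀none
      rw [show M.run w (T+1) = (M.run w T).bind M.stepCfg from rfl, hrT,
        Option.bind_some] at h1
      exact h1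
    have hle_T : ∀ n c', M.run w n = some c' → n ≤ T ∧ c' = M.runT c0 n := by
      intro n c' hrun
      have hns : (M.run w n).isSome := by rw [hrun]; rfl
      have hnT : n ≤ T := by
        by_contra hc
        have h1 : n₀ ≤ n := by omega
        have := M.runFrom_isSome_of_le c0 h1 (by rw [← hbridge]; exact hns)
        rw [← hbridge] at this
        exact hn₀none this
      have := M.runFrom_eq_runT c0 n (by rw [← hbridge]; exact hns)
      rw [← hbridge, hrun] at this
      exact ⟨hnT, Option.some_inj.mp this⟩
    rcases hvis with hL | hR
    · -- left side: use the mirror machine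
      have hmr : ∀ n, (M.mirrorM).runFrom (mirrorCfg c0) n =
          (M.runFrom c0 n).map mirrorCfg := mirror_runFrom M c0
      have hsTm : ((M.mirrorM).runFrom (mirrorCfg c0) T).isSome := by
        rw [hmr]; simpa using hsT
      have hrTmn : ∀ n, n ≤ T → (M.mirrorM).runT (mirrorCfg c0) n = mirrorCfg (M.runT c0 n) := by
        intro n hn
        have hsn : (M.runFrom c0 n).isSome := M.runFrom_isSome_of_le c0 hn hsT
        have hsnm : ((M.mirrorM).runFrom (mirrorCfg c0) n).isSome := by
          rw [hmr]; simpa using hsn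
        have h1 := (M.mirrorM).runFrom_eq_runT (mirrorCfg c0) n hsnm
        rw [hmr, M.runFrom_eq_runT c0 n hsn] at h1
        simp only [Option.map_some] at h1
        exact (Option.some_inj.mp h1).symm
      have hhTm : (M.mirrorM).stepCfg ((M.mirrorM).runT (mirrorCfg c0) T) = none := by
        rw [hrTmn T (le_refl T), mirror_step, hhT]
        rfl
      apply (M.mirrorM).core (mirror_wr M hwr) (mirrorCfg c0) hsTm hhTm (i₀ := 1)
        (fun x hx => ?_) (show -c0.head ≤ 1 by norm_num [hc0, initCfg]) (fun j hj => ?_)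
      · show M.initTape w (-x) = M.blank
        unfold initTape
        rw [if_neg (by omega : ¬ (0:ℤ) ≤ -x)]
      · obtain ⟨n, c', hrun, hhd⟩ := hL j hj
        obtain ⟨hnT, rfl⟩ := hle_T n c' hrun
        refine ⟨n, hnT, ?_⟩
        show ((M.mirrorM).runT (mirrorCfg c0) n).head = 1 + (j : ℤ)
        rw [hrTmn n hnT]
        show -((M.runT c0 n).head) = 1 + (j : ℤ)
        rw [hhd]
        ring
    · -- right side
      apply M.core hwr c0 hsT hhT (i₀ := (w.length : ℤ))
        (fun x hx => M.initTape_blank w hx)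
        (show c0.head ≤ (w.length:ℤ) by norm_num [hc0, initCfg])
        (fun j hj => ?_)
      obtain ⟨n, c', hrun, hhd⟩ := hR j hj
      obtain ⟨hnT, rfl⟩ := hle_T n c' hrun
      exact ⟨n, hnT, hhd⟩
end

section
/- For every weight-reducing deterministic one-tape Turing machine M there is a constant C, depending only on M, such that every computation of M either is infinite and visits infinitely many tape cells, or is finite, visits at most C initially-blank cells, and has length at most a linear function of the input length. -/
section AuxWR

attribute [local instance] Classical.propDecidable

open Finset

namespace DTM

variable {A Q Γ : Type*}

lemma run_succ' (M : DTM A Q Γ) (w : List A) (n : ℕ) :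
    M.run w (n + 1) = (M.run w n).bind M.stepCfg := rfl

lemma run_none_mono (M : DTM A Q Γ) (w : List A) {m n : ℕ} (h : m ≤ n)
    (hm : M.run w m = none) : M.run w n = none := by
  obtain ⟨k, rfl⟩ := Nat.exists_eq_add_of_le h
  induction k with
  | zero => exact hm
  | succ k ih =>
    show M.run w (m + k + 1) = none
    rw [run_succ', ih (Nat.le_add_right m k)]
    rfl

lemma stepCfg_some_elim {M : DTM A Q Γ} {d d' : TMCfg Q Γ} (h : M.stepCfg d = some d') :
    ∃ a : Q × Γ × Bool, M.δ d.state (d.tape d.head) = some a ∧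
      d' = ⟨a.1, Function.update d.tape d.head a.2.1,
        if a.2.2 then d.head + 1 else d.head - 1⟩ := by
  unfold stepCfg at h
  cases hδ : M.δ d.state (d.tape d.head) with
  | none => rw [hδ] at h; simp at h
  | some a =>
    rw [hδ] at h
    simp only [Option.map_some, Option.some_inj] at h
    exact ⟨a, rfl, h.symm⟩

variable {M : DTM A Q Γ} {w : List A} {c : ℕ → TMCfg Q Γ} {t : ℕ}

lemma ctx_zero (hc : ∀ m ≤ t, M.run w m = some (c m)) : c 0 = M.initCfg w := by
  have h := hc 0 (Nat.zero_le _)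
  have h0 : M.run w 0 = some (M.initCfg w) := rfl
  rw [h0] at h
  exact (Option.some_inj.mp h).symm

lemma ctx_head0 (hc : ∀ m ≤ t, M.run w m = some (c m)) : (c 0).head = 0 := by
  rw [ctx_zero hc]; rfl

lemma ctx_step (hc : ∀ m ≤ t, M.run w m = some (c m)) {m : ℕ} (hm : m < t) :
    M.stepCfg (c m) = some (c (m + 1)) := by
  have h1 := hc m hm.le
  have h2 := hc (m + 1) hm
  rw [run_succ', h1, Option.bind_some] at h2
  exact h2

lemma ctx_move (hc : ∀ m ≤ t, M.run w m = some (c m)) {m : ℕ} (hm : m < t) :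
    ∃ a : Q × Γ × Bool, M.δ (c m).state ((c m).tape (c m).head) = some a ∧
      (c (m+1)).state = a.1 ∧
      (c (m+1)).tape = Function.update (c m).tape (c m).head a.2.1 ∧
      (c (m+1)).head = (if a.2.2 then (c m).head + 1 else (c m).head - 1) := by
  obtain ⟨a, hδ, he⟩ := stepCfg_some_elim (ctx_step hc hm)
  exact ⟨a, hδ, by rw [he], by rw [he], by rw [he]⟩

lemma ctx_move_head (hc : ∀ m ≤ t, M.run w m = some (c m)) {m : ℕ} (hm : m < t) :
    (c (m+1)).head = (c m).head + 1 ∨ (c (m+1)).head = (c m).head - 1 := by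
  obtain ⟨⟨q, τ, dir⟩, _, _, _, hh⟩ := ctx_move hc hm
  cases dir
  · right; simpa using hh
  · left; simpa using hh

lemma ctx_tape_step (hc : ∀ m ≤ t, M.run w m = some (c m)) {m : ℕ} (hm : m < t)
    {x : ℤ} (hx : x ≠ (c m).head) : (c (m+1)).tape x = (c m).tape x := by
  obtain ⟨a, _, _, ht, _⟩ := ctx_move hc hm
  rw [ht, Function.update_of_ne hx]

lemma ctx_headabs (hc : ∀ m ≤ t, M.run w m = some (c m)) :
    ∀ m, m ≤ t → (c m).head.natAbs ≤ m := by
  intro m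
  induction m with
  | zero => intro _; rw [ctx_head0 hc]; exact le_refl 0
  | succ m ih =>
    intro hm
    have h1 := ih (Nat.le_of_succ_le hm)
    rcases ctx_move_head hc (Nat.lt_of_succ_le hm) with h | h <;> omega

lemma ctx_stab (hc : ∀ m ≤ t, M.run w m = some (c m)) {x : ℤ} :
    ∀ b, b ≤ t → ∀ a, a ≤ b → (∀ u, a ≤ u → u < b → (c u).head ≠ x) →
      (c b).tape x = (c a).tape x := by
  intro b
  induction b with
  | zero =>
    intro _ a ha _
    have : a = 0 := Nat.le_zero.mp ha
    rw [this]
  | succ b ih =>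
    intro hb a ha h
    rcases Nat.eq_or_lt_of_le ha with rfl | hlt
    · rfl
    · have hab : a ≤ b := Nat.lt_succ_iff.mp hlt
      rw [ctx_tape_step hc (Nat.lt_of_succ_le hb) ((h b hab (Nat.lt_succ_self b)).symm)]
      exact ih (Nat.le_of_succ_le hb) a hab (fun u hu1 hu2 => h u hu1 (Nat.lt_succ_of_lt hu2))

lemma ctx_decrease (hc : ∀ m ≤ t, M.run w m = some (c m)) {ltr : Γ → Γ → Prop}
    (hδw : ∀ p σ q τ d, M.δ p σ = some (q, τ, d) → ltr τ σ) (htr : Transitive ltr) :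
    ∀ d m m', m' - m = d → m < m' → m' ≤ t → ∀ x, (c m).head = x → (c m').head = x →
      ltr ((c m').tape x) ((c m).tape x) := by
  intro d
  induction d using Nat.strong_induction_on with
  | _ d ih =>
    intro m m' hd hmm hm' x h1 h2
    by_cases hmid : ∃ u, m < u ∧ u < m' ∧ (c u).head = x
    · obtain ⟨u, hu1, hu2, hu3⟩ := hmid
      exact htr (ih (m' - u) (by omega) u m' (by omega) hu2 hm' x hu3 h2)
                (ih (u - m) (by omega) m u (by omega) hu1 (by omega) x h1 hu3)
    · have hmt : m < t := lt_of_lt_of_le hmm hm'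
      obtain ⟨⟨q, τ, dir⟩, hδa, _, hta, _⟩ := ctx_move hc hmt
      have hw : ltr τ ((c m).tape (c m).head) := hδw _ _ _ _ _ hδa
      rw [h1] at hw
      have ht1 : (c (m+1)).tape x = τ := by
        rw [hta, ← h1, Function.update_self]
      have hst2 : (c m').tape x = (c (m+1)).tape x := by
        apply ctx_stab hc m' hm' (m+1) hmm
        intro u hu1 hu2 he
        exact hmid ⟨u, by omega, hu2, he⟩
      rw [hst2, ht1]
      exact hw

lemma ctx_visit_card [Fintype Γ] (hc : ∀ m ≤ t, M.run w m = some (c m))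
    {ltr : Γ → Γ → Prop} (hδw : ∀ p σ q τ d, M.δ p σ = some (q, τ, d) → ltr τ σ)
    (htr : Transitive ltr) (hir : ∀ γ : Γ, ¬ ltr γ γ) (x : ℤ) :
    ((Finset.range (t+1)).filter (fun m => (c m).head = x)).card ≤ Fintype.card Γ := by
  rw [← Finset.card_univ]
  apply Finset.card_le_card_of_injOn (fun m => (c m).tape x) (fun _ _ => Finset.mem_univ _)
  intro m hm m' hm' he
  simp only [Finset.coe_filter, Set.mem_setOf_eq, Finset.mem_range] at hm hm'
  by_contra hne
  rcases Nat.lt_or_ge m m' with h | h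
  · have := ctx_decrease hc hδw htr _ m m' rfl h (by omega) x hm.2 hm'.2
    simp only at he
    rw [he] at this
    exact hir _ this
  · have hlt : m' < m := by omega
    have := ctx_decrease hc hδw htr _ m' m rfl hlt (by omega) x hm'.2 hm.2
    simp only at he
    rw [he] at this
    exact hir _ this

end DTM

end AuxWR

section AuxWR2

attribute [local instance] Classical.propDecidable

open Finset

namespace DTM

variable {A Q Γ : Type*}

lemma bnd_fin {P : ℕ → Prop} {t : ℕ} (hPt : ∀ m, P m → m ≤ t) : (Set.ofPred P).Finite :=
  (Set.finite_Iic t).subset fun m hm => hPt m hm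

lemma bnd_card {P : ℕ → Prop} {t : ℕ} (hPt : ∀ m, P m → m ≤ t) :
    #(bnd_fin hPt).toFinset = Nat.count P (t+1) := by
  rw [Nat.count_eq_card_filter_range]
  congr 1
  ext m
  simp only [Set.Finite.mem_toFinset, Set.mem_setOf_eq, Finset.mem_filter, Finset.mem_range,
    Nat.lt_succ_iff]
  exact ⟨fun hm => ⟨hPt m hm, hm⟩, fun hm => hm.2⟩

lemma bnd_mem {P : ℕ → Prop} {t : ℕ} (hPt : ∀ m, P m → m ≤ t) {k : ℕ}
    (hk : k < Nat.count P (t+1)) : P (Nat.nth P k) :=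
  Nat.nth_mem_of_lt_card (bnd_fin hPt) (by rw [bnd_card hPt]; exact hk)

lemma bnd_count_nth {P : ℕ → Prop} {t : ℕ} (hPt : ∀ m, P m → m ≤ t) {k : ℕ}
    (hk : k < Nat.count P (t+1)) : Nat.count P (Nat.nth P k) = k :=
  Nat.count_nth_of_lt_card_finite (bnd_fin hPt) (by rw [bnd_card hPt]; exact hk)

lemma bnd_lt {P : ℕ → Prop} {t : ℕ} (hPt : ∀ m, P m → m ≤ t) {k k' : ℕ}
    (h : k < k') (hk' : k' < Nat.count P (t+1)) : Nat.nth P k < Nat.nth P k' :=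
  Nat.nth_lt_nth_of_lt_card (bnd_fin hPt) h (by rw [bnd_card hPt]; exact hk')

lemma bnd_le {P : ℕ → Prop} {t : ℕ} (hPt : ∀ m, P m → m ≤ t) {k k' : ℕ}
    (h : k ≤ k') (hk' : k' < Nat.count P (t+1)) : Nat.nth P k ≤ Nat.nth P k' :=
  Nat.nth_le_nth_of_lt_card (bnd_fin hPt) h (by rw [bnd_card hPt]; exact hk')

lemma bnd_rev_lt {P : ℕ → Prop} {t : ℕ} (hPt : ∀ m, P m → m ≤ t) {k k' : ℕ}
    (h : Nat.nth P k < Nat.nth P k') (hk : k < Nat.count P (t+1)) : k < k' :=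
  Nat.lt_of_nth_lt_nth_of_lt_card (bnd_fin hPt) h (by rw [bnd_card hPt]; exact hk)

lemma bnd_count_lt {P : ℕ → Prop} {t : ℕ} (hPt : ∀ m, P m → m ≤ t) {m : ℕ}
    (hm : P m) : Nat.count P m < Nat.count P (t+1) := by
  have := Nat.count_lt_card (bnd_fin hPt) hm
  rwa [bnd_card hPt] at this

lemma bnd_gap {P : ℕ → Prop} {t : ℕ} (hPt : ∀ m, P m → m ≤ t) {k m : ℕ}
    (hkc : k + 1 < Nat.count P (t+1)) (h1 : Nat.nth P k < m) (h2 : m < Nat.nth P (k+1))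
    (hm : P m) : False := by
  have hj : Nat.nth P (Nat.count P m) = m := Nat.nth_count hm
  have hjc : Nat.count P m < Nat.count P (t+1) := bnd_count_lt hPt hm
  have hkj : k < Nat.count P m := bnd_rev_lt hPt (by rw [hj]; exact h1) (by omega)
  have h5 : Nat.nth P (k+1) ≤ Nat.nth P (Nat.count P m) := bnd_le hPt hkj hjc
  omega

lemma count_stable {P : ℕ → Prop} : ∀ b a, a ≤ b → (∀ u, a ≤ u → u < b → ¬ P u) →
    Nat.count P b = Nat.count P a := by
  intro b
  induction b with
  | zero => intro a ha _; rw [Nat.le_zero.mp ha]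
  | succ b ih =>
    intro a ha h
    rcases Nat.eq_or_lt_of_le ha with rfl | hlt
    · rfl
    · have hab : a ≤ b := by omega
      rw [Nat.count_succ, if_neg (h b hab (Nat.lt_succ_self b)),
        ih a hab (fun u h1 h2 => h u h1 (by omega))]
      omega

lemma count_pos_of_mem {P : ℕ → Prop} {t m : ℕ} (hPt : ∀ m, P m → m ≤ t) (hm : P m) :
    0 < Nat.count P (t+1) := by
  have := bnd_count_lt hPt hm
  omega

lemma count_eq_index_card {P R : ℕ → Prop} {t : ℕ} (hRt : ∀ m, R m → m ≤ t)
    (hPR : ∀ m, P m → R m) {K b : ℕ} (hK : K ≤ Nat.count R (t+1))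
    (hb1 : ∀ m, R m → m < b → Nat.count R m < K)
    (hb2 : ∀ k, k < K → Nat.nth R k < b) :
    Nat.count P b = ((Finset.range K).filter (fun k => P (Nat.nth R k))).card := by
  rw [Nat.count_eq_card_filter_range]
  apply Finset.card_bij (fun m _ => Nat.count R m)
  · intro m hm
    simp only [Finset.mem_filter, Finset.mem_range] at hm ⊢
    refine ⟨hb1 m (hPR m hm.2) hm.1, ?_⟩
    rw [Nat.nth_count (hPR m hm.2)]
    exact hm.2
  · intro m hm m' hm' he
    simp only [Finset.mem_filter, Finset.mem_range] at hm hm'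
    exact Nat.count_injective (hPR m hm.2) (hPR m' hm'.2) he
  · intro k hk
    simp only [Finset.mem_filter, Finset.mem_range] at hk
    refine ⟨Nat.nth R k, ?_, ?_⟩
    · simp only [Finset.mem_filter, Finset.mem_range]
      exact ⟨hb2 k hk.1, hk.2⟩
    · exact bnd_count_nth hRt (lt_of_lt_of_le hk.1 hK)

/-- visit predicate -/
def vpred (c : ℕ → TMCfg Q Γ) (t : ℕ) (x : ℤ) : ℕ → Prop :=
  fun m => m ≤ t ∧ (c m).head = x

/-- region predicate -/
def rpred (c : ℕ → TMCfg Q Γ) (t : ℕ) (ε b : ℤ) : ℕ → Prop :=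
  fun m => m ≤ t ∧ ε * b ≤ ε * (c m).head

/-- number of visits of cell `x` -/
noncomputable def nv (c : ℕ → TMCfg Q Γ) (t : ℕ) (x : ℤ) : ℕ :=
  Nat.count (vpred c t x) (t+1)

/-- the visit trace of cell `x`: states at successive visits -/
noncomputable def vtr (c : ℕ → TMCfg Q Γ) (t : ℕ) (g : ℕ) (x : ℤ) : Fin g → Option Q :=
  fun j => if (j : ℕ) < nv c t x
    then some ((c (Nat.nth (vpred c t x) j)).state) else none

lemma vpred_t {c : ℕ → TMCfg Q Γ} {t : ℕ} {x : ℤ} : ∀ m, vpred c t x m → m ≤ t :=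
  fun _ hm => hm.1

lemma rpred_t {c : ℕ → TMCfg Q Γ} {t : ℕ} {ε b : ℤ} : ∀ m, rpred c t ε b m → m ≤ t :=
  fun _ hm => hm.1

lemma vtr_eq_count {c : ℕ → TMCfg Q Γ} {t g : ℕ} {x y : ℤ}
    (hx : nv c t x ≤ g) (hy : nv c t y ≤ g) (h : vtr c t g x = vtr c t g y) :
    nv c t x = nv c t y := by
  by_contra hne
  rcases Nat.lt_or_ge (nv c t x) (nv c t y) with hl | hl
  · have h2 := congrFun h ⟨nv c t x, lt_of_lt_of_le hl hy⟩
    simp only [vtr] at h2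
    rw [if_neg (lt_irrefl _), if_pos hl] at h2
    exact nomatch h2
  · have hl2 : nv c t y < nv c t x := by omega
    have h2 := congrFun h ⟨nv c t y, lt_of_lt_of_le hl2 hx⟩
    simp only [vtr] at h2
    rw [if_pos hl2, if_neg (lt_irrefl _)] at h2
    exact nomatch h2

lemma vtr_eq_state {c : ℕ → TMCfg Q Γ} {t g : ℕ} {x y : ℤ}
    (hx : nv c t x ≤ g) (h : vtr c t g x = vtr c t g y) {j : ℕ}
    (hj : j < nv c t x) (hj' : j < nv c t y) :
    (c (Nat.nth (vpred c t x) j)).state = (c (Nat.nth (vpred c t y) j)).state := by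
  have h2 := congrFun h ⟨j, lt_of_lt_of_le hj hx⟩
  simp only [vtr] at h2
  rw [if_pos hj, if_pos hj'] at h2
  exact Option.some_inj.mp h2

end DTM

end AuxWR2

section AuxWR3

attribute [local instance] Classical.propDecidable

open Finset

namespace DTM

variable {A Q Γ : Type*} {M : DTM A Q Γ} {w : List A} {c : ℕ → TMCfg Q Γ} {t : ℕ}

lemma ctx_entry (hc : ∀ m ≤ t, M.run w m = some (c m)) {ε : ℤ} (hε : ε = 1 ∨ ε = -1)
    {q₀ : ℤ} (hq : 1 ≤ ε * q₀) {n : ℕ}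
    (h0 : 0 < n) (hn : n ≤ t) (hreg : ε * q₀ ≤ ε * (c n).head)
    (hprev : ¬ (ε * q₀ ≤ ε * (c (n-1)).head)) : (c n).head = q₀ := by
  have hlt : n - 1 < t := by omega
  have hmv := ctx_move_head hc hlt
  have hn1 : n - 1 + 1 = n := by omega
  rw [hn1] at hmv
  rcases hε with rfl | rfl <;> rcases hmv with h | h <;> omega

lemma ctx_base (hc : ∀ m ≤ t, M.run w m = some (c m)) {ε : ℤ} (hε : ε = 1 ∨ ε = -1)
    {q₀ : ℤ} (hq : 1 ≤ ε * q₀) :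
    (0 < Nat.count (rpred c t ε q₀) (t+1) ↔ 0 < nv c t q₀) ∧
    (0 < Nat.count (rpred c t ε q₀) (t+1) →
      Nat.nth (rpred c t ε q₀) 0 = Nat.nth (vpred c t q₀) 0 ∧
      (∀ x : ℤ, ε * q₀ ≤ ε * x → (c (Nat.nth (rpred c t ε q₀) 0)).tape x = M.initTape w x)) := by
  have hnotR0 : ¬ rpred c t ε q₀ 0 := by
    intro h
    have h2 := h.2
    rw [ctx_head0 hc] at h2
    rcases hε with rfl | rfl <;> omega
  have main : 0 < Nat.count (rpred c t ε q₀) (t+1) →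
      vpred c t q₀ (Nat.nth (rpred c t ε q₀) 0) ∧
      Nat.nth (rpred c t ε q₀) 0 = Nat.nth (vpred c t q₀) 0 ∧
      ∀ x : ℤ, ε * q₀ ≤ ε * x → (c (Nat.nth (rpred c t ε q₀) 0)).tape x = M.initTape w x := by
    intro hpos
    set n := Nat.nth (rpred c t ε q₀) 0 with hn
    have hRn : rpred c t ε q₀ n := bnd_mem rpred_t hpos
    have hnt : n ≤ t := hRn.1
    have hnone : ∀ u, u < n → ¬ rpred c t ε q₀ u := by
      intro u hu hru
      have hcn : Nat.count (rpred c t ε q₀) n = 0 := bnd_count_nth rpred_t hpos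
      have h1 : Nat.count (rpred c t ε q₀) (u+1) ≤ Nat.count (rpred c t ε q₀) n :=
        Nat.count_monotone _ hu
      rw [Nat.count_succ, if_pos hru] at h1
      omega
    have hn0 : 0 < n := by
      rcases Nat.eq_zero_or_pos n with h | h
      · rw [h] at hRn; exact absurd hRn hnotR0
      · exact h
    have hhd : (c n).head = q₀ := by
      apply ctx_entry hc hε hq hn0 hnt hRn.2
      intro hcontra
      exact hnone (n-1) (by omega) ⟨by omega, hcontra⟩
    have hv : vpred c t q₀ n := ⟨hnt, hhd⟩
    have hcv : Nat.count (vpred c t q₀) n = 0 := by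
      have := count_stable (P := vpred c t q₀) n 0 (Nat.zero_le _)
        (fun u _ hu2 hvv => hnone u hu2 ⟨hvv.1, by rw [hvv.2]⟩)
      rw [this, Nat.count_zero]
    have hnth : Nat.nth (vpred c t q₀) 0 = n := by
      have h2 := Nat.nth_count hv
      rw [hcv] at h2
      exact h2
    refine ⟨hv, hnth.symm, ?_⟩
    intro x hx
    have hst := ctx_stab (x := x) hc n hnt 0 (Nat.zero_le _) ?_
    · rw [hst, ctx_zero hc]; rfl
    · intro u _ hu2 he
      exact hnone u hu2 ⟨by omega, by rw [he]; exact hx⟩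
  refine ⟨⟨?_, ?_⟩, fun hpos => ⟨(main hpos).2.1, (main hpos).2.2⟩⟩
  · intro hpos
    obtain ⟨hv, _, _⟩ := main hpos
    exact count_pos_of_mem vpred_t hv
  · intro hpos
    have hv : vpred c t q₀ (Nat.nth (vpred c t q₀) 0) := bnd_mem vpred_t hpos
    have hr : rpred c t ε q₀ (Nat.nth (vpred c t q₀) 0) := ⟨hv.1, by rw [hv.2]⟩
    exact count_pos_of_mem rpred_t hr

lemma ctx_exit_next (hc : ∀ m ≤ t, M.run w m = some (c m)) {ε : ℤ} (hε : ε = 1 ∨ ε = -1)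
    {q₀ : ℤ} (hq : 1 ≤ ε * q₀)
    {i : ℕ}
    (hnin : ¬ (ε * q₀ ≤ ε * (c (Nat.nth (rpred c t ε q₀) i + 1)).head))
    (hk : i + 1 < Nat.count (rpred c t ε q₀) (t+1)) :
    (c (Nat.nth (rpred c t ε q₀) (i+1))).head = q₀ ∧
    Nat.count (vpred c t q₀) (Nat.nth (rpred c t ε q₀) (i+1)) =
      Nat.count (vpred c t q₀) (Nat.nth (rpred c t ε q₀) i + 1) ∧
    Nat.nth (rpred c t ε q₀) i + 1 < Nat.nth (rpred c t ε q₀) (i+1) ∧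
    (∀ u, Nat.nth (rpred c t ε q₀) i < u → u < Nat.nth (rpred c t ε q₀) (i+1) →
      ¬ rpred c t ε q₀ u) := by
  set m := Nat.nth (rpred c t ε q₀) i with hm
  set n := Nat.nth (rpred c t ε q₀) (i+1) with hn
  have hRn : rpred c t ε q₀ n := bnd_mem rpred_t hk
  have hnt : n ≤ t := hRn.1
  have hmn : m < n := bnd_lt rpred_t (Nat.lt_succ_self i) hk
  have hgap : ∀ u, m < u → u < n → ¬ rpred c t ε q₀ u :=
    fun u h1 h2 hu => absurd hu (fun hu' => bnd_gap rpred_t hk h1 h2 hu')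
  have hne1 : n ≠ m + 1 := by
    intro h
    rw [h] at hRn
    exact hnin hRn.2
  have hmn2 : m + 1 < n := by omega
  have hhd : (c n).head = q₀ := by
    apply ctx_entry hc hε hq (by omega) hnt hRn.2
    intro hcontra
    exact hgap (n-1) (by omega) (by omega) ⟨by omega, hcontra⟩
  refine ⟨hhd, ?_, hmn2, hgap⟩
  exact count_stable n (m+1) (by omega)
    (fun u h1 h2 hv => hgap u (by omega) h2 ⟨hv.1, by rw [hv.2]⟩)

end DTM

end AuxWR3

section AuxWR4

attribute [local instance] Classical.propDecidable

open Finset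

namespace DTM

variable {A Q Γ : Type*} {M : DTM A Q Γ} {w : List A} {c : ℕ → TMCfg Q Γ} {t : ℕ}

lemma ctx_sim (hc : ∀ m ≤ t, M.run w m = some (c m)) (hlast : M.run w (t+1) = none)
    {g : ℕ} (hg : ∀ x : ℤ, nv c t x ≤ g)
    {ε p p' : ℤ} (hε : ε = 1 ∨ ε = -1)
    (hp : 1 ≤ ε * p) (hp' : 1 ≤ ε * p')
    (hbl : ∀ x, ε * p ≤ ε * x → M.initTape w x = M.blank)
    (hbl' : ∀ x, ε * p' ≤ ε * x → M.initTape w x = M.blank)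
    (hvt : vtr c t g p = vtr c t g p') :
    ∀ x : ℤ, ε * p ≤ ε * x → vtr c t g (x + (p' - p)) = vtr c t g x := by
  have hε0 : ε ≠ 0 := by rcases hε with rfl | rfl <;> norm_num
  set s : ℤ := p' - p with hs
  have hshift : ∀ x : ℤ, ε * p ≤ ε * x → ε * p' ≤ ε * (x + s) := by
    intro x hx
    have h1 : ε * (x + s) = ε * x + (ε * p' - ε * p) := by rw [hs]; ring
    linarith
  have hshift2 : ∀ x : ℤ, ε * p' ≤ ε * (x + s) → ε * p ≤ ε * x := by
    intro x hx
    have h1 : ε * (x + s) = ε * x + (ε * p' - ε * p) := by rw [hs]; ring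
    linarith
  have hNV : nv c t p = nv c t p' := vtr_eq_count (hg p) (hg p') hvt
  have hsub : ∀ m, vpred c t p m → rpred c t ε p m := fun m hm => ⟨hm.1, by rw [hm.2]⟩
  have hsub' : ∀ m, vpred c t p' m → rpred c t ε p' m := fun m hm => ⟨hm.1, by rw [hm.2]⟩
  have main : ∀ k : ℕ,
      (k < Nat.count (rpred c t ε p) (t+1) ↔ k < Nat.count (rpred c t ε p') (t+1)) ∧
      (k < Nat.count (rpred c t ε p) (t+1) → k < Nat.count (rpred c t ε p') (t+1) →
        ((c (Nat.nth (rpred c t ε p) k)).state = (c (Nat.nth (rpred c t ε p') k)).state ∧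
         (c (Nat.nth (rpred c t ε p') k)).head = (c (Nat.nth (rpred c t ε p) k)).head + s ∧
         ∀ x : ℤ, ε * p ≤ ε * x →
           (c (Nat.nth (rpred c t ε p') k)).tape (x + s) =
             (c (Nat.nth (rpred c t ε p) k)).tape x)) := by
    intro k
    induction k using Nat.strong_induction_on with
    | _ k ih =>
      cases k with
      | zero =>
        obtain ⟨hiff1, hdat1⟩ := ctx_base (q₀ := p) hc hε hp
        obtain ⟨hiff2, hdat2⟩ := ctx_base (q₀ := p') hc hε hp'
        have hiff : (0 < Nat.count (rpred c t ε p) (t+1) ↔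
            0 < Nat.count (rpred c t ε p') (t+1)) := by
          rw [hiff1, hiff2, hNV]
        refine ⟨hiff, ?_⟩
        intro hk hk'
        obtain ⟨hnth1, htp1⟩ := hdat1 hk
        obtain ⟨hnth2, htp2⟩ := hdat2 hk'
        have hnv : 0 < nv c t p := hiff1.mp hk
        have hnv' : 0 < nv c t p' := hiff2.mp hk'
        have hv1 : vpred c t p (Nat.nth (vpred c t p) 0) := bnd_mem vpred_t hnv
        have hv2 : vpred c t p' (Nat.nth (vpred c t p') 0) := bnd_mem vpred_t hnv'
        refine ⟨?_, ?_, ?_⟩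
        · rw [hnth1, hnth2]
          exact vtr_eq_state (hg p) hvt hnv hnv'
        · rw [hnth1, hnth2, hv1.2, hv2.2, hs]; ring
        · intro x hx
          rw [htp1 x hx, htp2 (x+s) (hshift x hx), hbl x hx, hbl' (x+s) (hshift x hx)]
      | succ i =>
        have hIH := ih i (Nat.lt_succ_self i)
        rcases Nat.lt_or_ge i (Nat.count (rpred c t ε p) (t+1)) with hiR | hiR
        swap
        · have h1 : ¬ i < Nat.count (rpred c t ε p') (t+1) := fun h =>
            absurd (hIH.1.mpr h) (by omega)
          have h2 : Nat.count (rpred c t ε p') (t+1) ≤ i := Nat.not_lt.mp h1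
          exact ⟨⟨fun h => absurd h (by omega), fun h => absurd h (by omega)⟩,
            fun hk _ => absurd hk (by omega)⟩
        have hiR' : i < Nat.count (rpred c t ε p') (t+1) := hIH.1.mp hiR
        obtain ⟨hst, hhd, htp⟩ := hIH.2 hiR hiR'
        set m := Nat.nth (rpred c t ε p) i with hm
        set m' := Nat.nth (rpred c t ε p') i with hm'
        have hRm : rpred c t ε p m := bnd_mem rpred_t hiR
        have hR'm : rpred c t ε p' m' := bnd_mem rpred_t hiR'
        have hmt : m ≤ t := hRm.1
        have hm't : m' ≤ t := hR'm.1
        have hcntm : Nat.count (rpred c t ε p) m = i := by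
          rw [hm]; exact bnd_count_nth rpred_t hiR
        have hcntm' : Nat.count (rpred c t ε p') m' = i := by
          rw [hm']; exact bnd_count_nth rpred_t hiR'
        have hsym : (c m').tape (c m').head = (c m).tape (c m).head := by
          rw [hhd]; exact htp _ hRm.2
        cases hδc : M.δ (c m).state ((c m).tape (c m).head) with
        | none =>
          have hmeq : m = t := by
            rcases Nat.eq_or_lt_of_le hmt with h | h
            · exact h
            · obtain ⟨a, hδa, _, _, _⟩ := ctx_move hc h
              rw [hδc] at hδa; exact nomatch hδa
          have hm'eq : m' = t := by
            rcases Nat.eq_or_lt_of_le hm't with h | h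
            · exact h
            · obtain ⟨a, hδa, _, _, _⟩ := ctx_move hc h
              rw [hsym, ← hst, hδc] at hδa
              exact nomatch hδa
          have hcR : Nat.count (rpred c t ε p) (t+1) = i + 1 := by
            rw [show t + 1 = m + 1 by omega, Nat.count_succ, if_pos hRm, hcntm]
          have hcR' : Nat.count (rpred c t ε p') (t+1) = i + 1 := by
            rw [show t + 1 = m' + 1 by omega, Nat.count_succ, if_pos hR'm, hcntm']
          exact ⟨by rw [hcR, hcR'], fun hk _ => absurd hk (by rw [hcR]; omega)⟩
        | some a =>
          have hmlt : m < t := by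
            rcases Nat.eq_or_lt_of_le hmt with h | h
            · exfalso
              have h2 : M.run w (t+1) = M.stepCfg (c t) := by
                rw [run_succ', hc t le_rfl, Option.bind_some]
              rw [hlast] at h2
              have h3 : M.stepCfg (c m) = none := by rw [h]; exact h2.symm
              unfold stepCfg at h3
              rw [hδc] at h3
              simp at h3
            · exact h
          have hm'lt : m' < t := by
            rcases Nat.eq_or_lt_of_le hm't with h | h
            · exfalso
              have h2 : M.run w (t+1) = M.stepCfg (c t) := by
                rw [run_succ', hc t le_rfl, Option.bind_some]
              rw [hlast] at h2
              have h3 : M.stepCfg (c m') = none := by rw [h]; exact h2.symm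
              unfold stepCfg at h3
              rw [hsym, ← hst, hδc] at h3
              simp at h3
            · exact h
          obtain ⟨a1, hδ1, hst1, htp1, hhd1⟩ := ctx_move hc hmlt
          rw [hδc] at hδ1
          obtain rfl : a = a1 := Option.some_inj.mp hδ1
          obtain ⟨a2, hδ2, hst2, htp2, hhd2⟩ := ctx_move hc hm'lt
          rw [hsym, ← hst, hδc] at hδ2
          obtain rfl : a = a2 := Option.some_inj.mp hδ2
          have hhd1' : (c (m'+1)).head = (c (m+1)).head + s := by
            rw [hhd1, hhd2, hhd]
            by_cases hb : a.2.2 = true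
            · rw [if_pos hb, if_pos hb]; ring
            · rw [if_neg hb, if_neg hb]; ring
          have hst1' : (c (m+1)).state = (c (m'+1)).state := by rw [hst1, hst2]
          have htp1' : ∀ x : ℤ, ε * p ≤ ε * x →
              (c (m'+1)).tape (x + s) = (c (m+1)).tape x := by
            intro x hx
            rw [htp1, htp2, hhd]
            by_cases hxh : x = (c m).head
            · rw [hxh, Function.update_self, Function.update_self]
            · rw [Function.update_of_ne (fun hcon => hxh (by exact add_right_cancel hcon)),
                Function.update_of_ne hxh]
              exact htp x hx
          have hcm : Nat.count (rpred c t ε p) (m+1) = i + 1 := by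
            rw [Nat.count_succ, if_pos hRm, hcntm]
          have hcm' : Nat.count (rpred c t ε p') (m'+1) = i + 1 := by
            rw [Nat.count_succ, if_pos hR'm, hcntm']
          by_cases hin : ε * p ≤ ε * (c (m+1)).head
          · -- internal step
            have hR1 : rpred c t ε p (m+1) := ⟨hmlt, hin⟩
            have hin' : ε * p' ≤ ε * (c (m'+1)).head := by
              rw [hhd1']; exact hshift _ hin
            have hR'1 : rpred c t ε p' (m'+1) := ⟨hm'lt, hin'⟩
            have hnth1 : Nat.nth (rpred c t ε p) (i+1) = m + 1 := by
              have h4 := Nat.nth_count hR1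
              rw [hcm] at h4
              exact h4
            have hnth2 : Nat.nth (rpred c t ε p') (i+1) = m' + 1 := by
              have h4 := Nat.nth_count hR'1
              rw [hcm'] at h4
              exact h4
            have hlt1 : i + 1 < Nat.count (rpred c t ε p) (t+1) := by
              have h5 := bnd_count_lt rpred_t hR1
              omega
            have hlt2 : i + 1 < Nat.count (rpred c t ε p') (t+1) := by
              have h5 := bnd_count_lt rpred_t hR'1
              omega
            refine ⟨⟨fun _ => hlt2, fun _ => hlt1⟩, fun _ _ => ?_⟩
            rw [hnth1, hnth2]
            exact ⟨hst1', hhd1', htp1'⟩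
          · -- exit step
            have hin'2 : ¬ (ε * p' ≤ ε * (c (m'+1)).head) := by
              rw [hhd1']
              intro hcon
              exact hin (hshift2 _ hcon)
            have hnin : ¬ (ε * p ≤ ε * (c (Nat.nth (rpred c t ε p) i + 1)).head) := by
              rw [← hm]; exact hin
            have hnin' : ¬ (ε * p' ≤ ε * (c (Nat.nth (rpred c t ε p') i + 1)).head) := by
              rw [← hm']; exact hin'2
            -- alignment of visit counts
            have hjj : Nat.count (vpred c t p) (m+1) = Nat.count (vpred c t p') (m'+1) := by
              rw [count_eq_index_card (t := t) rpred_t hsub (K := i+1) (b := m+1) hiR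
                  (fun u hu hub => by
                    have h6 : Nat.count (rpred c t ε p) u ≤ Nat.count (rpred c t ε p) m :=
                      Nat.count_monotone _ (by omega)
                    omega)
                  (fun k hk => by
                    have h6 : Nat.nth (rpred c t ε p) k ≤ Nat.nth (rpred c t ε p) i :=
                      bnd_le rpred_t (by omega) hiR
                    omega),
                count_eq_index_card (t := t) rpred_t hsub' (K := i+1) (b := m'+1) hiR'
                  (fun u hu hub => by
                    have h6 : Nat.count (rpred c t ε p') u ≤ Nat.count (rpred c t ε p') m' :=
                      Nat.count_monotone _ (by omega)
                    omega)
                  (fun k hk => by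
                    have h6 : Nat.nth (rpred c t ε p') k ≤ Nat.nth (rpred c t ε p') i :=
                      bnd_le rpred_t (by omega) hiR'
                    omega)]
              congr 1
              apply Finset.filter_congr
              intro k hk
              simp only [Finset.mem_range] at hk
              have hkR : k < Nat.count (rpred c t ε p) (t+1) := by omega
              have hkR' : k < Nat.count (rpred c t ε p') (t+1) := (ih k (by omega)).1.mp hkR
              obtain ⟨_, hhdk, _⟩ := (ih k (by omega)).2 hkR hkR'
              have h5 : Nat.nth (rpred c t ε p) k ≤ t := (bnd_mem rpred_t hkR).1
              have h6 : Nat.nth (rpred c t ε p') k ≤ t := (bnd_mem rpred_t hkR').1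
              constructor
              · rintro ⟨_, hx⟩
                exact ⟨h6, by rw [hhdk, hx, hs]; ring⟩
              · rintro ⟨_, hx⟩
                refine ⟨h5, ?_⟩
                rw [hhdk] at hx
                omega
            -- existence of a next region time
            have hiff : (i + 1 < Nat.count (rpred c t ε p) (t+1)) ↔
                (Nat.count (vpred c t p) (m+1) < nv c t p) := by
              constructor
              · intro hk
                obtain ⟨hhdn, hcvn, _, _⟩ := ctx_exit_next hc hε hp hnin hk
                have hvn : vpred c t p (Nat.nth (rpred c t ε p) (i+1)) :=
                  ⟨(bnd_mem rpred_t hk).1, hhdn⟩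
                have h7 := bnd_count_lt (t := t) vpred_t hvn
                rw [hcvn, ← hm] at h7
                exact h7
              · intro hj
                have hvu : vpred c t p (Nat.nth (vpred c t p) (Nat.count (vpred c t p) (m+1))) :=
                  bnd_mem vpred_t hj
                have hcu : Nat.count (vpred c t p) (Nat.nth (vpred c t p)
                    (Nat.count (vpred c t p) (m+1))) = Nat.count (vpred c t p) (m+1) :=
                  bnd_count_nth vpred_t hj
                have hum : m < Nat.nth (vpred c t p) (Nat.count (vpred c t p) (m+1)) := by
                  by_contra hle
                  have h8 : Nat.nth (vpred c t p) (Nat.count (vpred c t p) (m+1)) + 1 ≤ m + 1 := by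
                    omega
                  have h9 : Nat.count (vpred c t p)
                      (Nat.nth (vpred c t p) (Nat.count (vpred c t p) (m+1)) + 1) ≤
                      Nat.count (vpred c t p) (m+1) := Nat.count_monotone _ h8
                  rw [Nat.count_succ, if_pos hvu, hcu] at h9
                  omega
                have hRu : rpred c t ε p (Nat.nth (vpred c t p) (Nat.count (vpred c t p) (m+1))) :=
                  hsub _ hvu
                have h10 : Nat.count (rpred c t ε p) (m+1) ≤
                    Nat.count (rpred c t ε p) (Nat.nth (vpred c t p)
                      (Nat.count (vpred c t p) (m+1))) := Nat.count_monotone _ (by omega)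
                have h11 := bnd_count_lt (t := t) rpred_t hRu
                omega
            have hiff' : (i + 1 < Nat.count (rpred c t ε p') (t+1)) ↔
                (Nat.count (vpred c t p') (m'+1) < nv c t p') := by
              constructor
              · intro hk
                obtain ⟨hhdn, hcvn, _, _⟩ := ctx_exit_next hc hε hp' hnin' hk
                have hvn : vpred c t p' (Nat.nth (rpred c t ε p') (i+1)) :=
                  ⟨(bnd_mem rpred_t hk).1, hhdn⟩
                have h7 := bnd_count_lt (t := t) vpred_t hvn
                rw [hcvn, ← hm'] at h7
                exact h7
              · intro hj
                have hvu : vpred c t p' (Nat.nth (vpred c t p') (Nat.count (vpred c t p') (m'+1))) :=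
                  bnd_mem vpred_t hj
                have hcu : Nat.count (vpred c t p') (Nat.nth (vpred c t p')
                    (Nat.count (vpred c t p') (m'+1))) = Nat.count (vpred c t p') (m'+1) :=
                  bnd_count_nth vpred_t hj
                have hum : m' < Nat.nth (vpred c t p') (Nat.count (vpred c t p') (m'+1)) := by
                  by_contra hle
                  have h8 : Nat.nth (vpred c t p') (Nat.count (vpred c t p') (m'+1)) + 1 ≤ m' + 1 := by
                    omega
                  have h9 : Nat.count (vpred c t p')
                      (Nat.nth (vpred c t p') (Nat.count (vpred c t p') (m'+1)) + 1) ≤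
                      Nat.count (vpred c t p') (m'+1) := Nat.count_monotone _ h8
                  rw [Nat.count_succ, if_pos hvu, hcu] at h9
                  omega
                have hRu : rpred c t ε p' (Nat.nth (vpred c t p')
                    (Nat.count (vpred c t p') (m'+1))) := hsub' _ hvu
                have h10 : Nat.count (rpred c t ε p') (m'+1) ≤
                    Nat.count (rpred c t ε p') (Nat.nth (vpred c t p')
                      (Nat.count (vpred c t p') (m'+1))) := Nat.count_monotone _ (by omega)
                have h11 := bnd_count_lt (t := t) rpred_t hRu
                omega
            refine ⟨by rw [hiff, hiff', hjj, hNV], ?_⟩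
            intro hk hk'
            obtain ⟨hhdn, hcvn, hmn2, hgapn⟩ := ctx_exit_next hc hε hp hnin hk
            obtain ⟨hhdn', hcvn', hmn2', hgapn'⟩ := ctx_exit_next hc hε hp' hnin' hk'
            set n := Nat.nth (rpred c t ε p) (i+1) with hn
            set n' := Nat.nth (rpred c t ε p') (i+1) with hn'
            have hnt : n ≤ t := (bnd_mem rpred_t hk).1
            have hn't : n' ≤ t := (bnd_mem rpred_t hk').1
            have hjlt : Nat.count (vpred c t p) (m+1) < nv c t p := hiff.mp hk
            have hjlt' : Nat.count (vpred c t p') (m'+1) < nv c t p' := hiff'.mp hk'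
            have hvn : vpred c t p n := ⟨hnt, hhdn⟩
            have hvn' : vpred c t p' n' := ⟨hn't, hhdn'⟩
            have hcvn2 : Nat.count (vpred c t p) n = Nat.count (vpred c t p) (m+1) := by
              rw [hcvn, ← hm]
            have hcvn2' : Nat.count (vpred c t p') n' = Nat.count (vpred c t p') (m'+1) := by
              rw [hcvn', ← hm']
            have hnthv : Nat.nth (vpred c t p) (Nat.count (vpred c t p) (m+1)) = n := by
              have h8 := Nat.nth_count hvn
              rw [hcvn2] at h8
              exact h8
            have hnthv' : Nat.nth (vpred c t p') (Nat.count (vpred c t p') (m'+1)) = n' := by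
              have h8 := Nat.nth_count hvn'
              rw [hcvn2'] at h8
              exact h8
            refine ⟨?_, ?_, ?_⟩
            · rw [← hnthv, ← hnthv', hjj]
              exact vtr_eq_state (hg p) hvt (by rw [← hjj]; exact hjlt) hjlt'
            · rw [hhdn, hhdn', hs]; ring
            · intro x hx
              have hstab1 : (c n).tape x = (c (m+1)).tape x := by
                apply ctx_stab (x := x) hc n hnt (m+1) (by omega)
                intro u hu1 hu2 he
                refine hgapn u (by omega) hu2 ⟨by omega, ?_⟩
                rw [he]; exact hx
              have hstab2 : (c n').tape (x+s) = (c (m'+1)).tape (x+s) := by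
                apply ctx_stab (x := x + s) hc n' hn't (m'+1) (by omega)
                intro u hu1 hu2 he
                refine hgapn' u (by omega) hu2 ⟨by omega, ?_⟩
                rw [he]; exact hshift x hx
              rw [hstab1, hstab2]
              exact htp1' x hx
  -- lengths of the two region sequences agree
  have hNReq : Nat.count (rpred c t ε p) (t+1) = Nat.count (rpred c t ε p') (t+1) := by
    have h1 : ¬ (Nat.count (rpred c t ε p) (t+1) < Nat.count (rpred c t ε p') (t+1)) :=
      fun h => absurd ((main _).1.mpr h) (lt_irrefl _)
    have h2 : ¬ (Nat.count (rpred c t ε p') (t+1) < Nat.count (rpred c t ε p) (t+1)) :=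
      fun h => absurd ((main _).1.mp h) (lt_irrefl _)
    omega
  intro x hx
  have hsubx : ∀ m, vpred c t x m → rpred c t ε p m :=
    fun m hm => ⟨hm.1, by rw [hm.2]; exact hx⟩
  have hsubxs : ∀ m, vpred c t (x+s) m → rpred c t ε p' m :=
    fun m hm => ⟨hm.1, by rw [hm.2]; exact hshift x hx⟩
  have hb1p : ∀ u, rpred c t ε p u → u < t+1 → Nat.count (rpred c t ε p) u <
      Nat.count (rpred c t ε p) (t+1) := fun u hu _ => bnd_count_lt rpred_t hu
  have hb2p : ∀ k, k < Nat.count (rpred c t ε p) (t+1) → Nat.nth (rpred c t ε p) k < t+1 :=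
    fun k hk => by have := (bnd_mem rpred_t hk).1; omega
  have hb1p' : ∀ u, rpred c t ε p' u → u < t+1 → Nat.count (rpred c t ε p') u <
      Nat.count (rpred c t ε p') (t+1) := fun u hu _ => bnd_count_lt rpred_t hu
  have hb2p' : ∀ k, k < Nat.count (rpred c t ε p') (t+1) → Nat.nth (rpred c t ε p') k < t+1 :=
    fun k hk => by have := (bnd_mem rpred_t hk).1; omega
  have hptwise : ∀ K, K ≤ Nat.count (rpred c t ε p) (t+1) →
      ((Finset.range K).filter (fun k => vpred c t x (Nat.nth (rpred c t ε p) k))).card =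
      ((Finset.range K).filter (fun k => vpred c t (x+s) (Nat.nth (rpred c t ε p') k))).card := by
    intro K hK
    congr 1
    apply Finset.filter_congr
    intro k hk
    simp only [Finset.mem_range] at hk
    have hkR : k < Nat.count (rpred c t ε p) (t+1) := by omega
    have hkR' : k < Nat.count (rpred c t ε p') (t+1) := (main k).1.mp hkR
    obtain ⟨_, hhdk, _⟩ := (main k).2 hkR hkR'
    have h5 : Nat.nth (rpred c t ε p) k ≤ t := (bnd_mem rpred_t hkR).1
    have h6 : Nat.nth (rpred c t ε p') k ≤ t := (bnd_mem rpred_t hkR').1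
    constructor
    · rintro ⟨_, hxx⟩
      exact ⟨h6, by rw [hhdk, hxx]⟩
    · rintro ⟨_, hxx⟩
      refine ⟨h5, ?_⟩
      rw [hhdk] at hxx
      omega
  have hcnt : Nat.count (vpred c t x) (t+1) = Nat.count (vpred c t (x+s)) (t+1) := by
    rw [count_eq_index_card (t := t) rpred_t hsubx le_rfl hb1p hb2p,
      count_eq_index_card (t := t) rpred_t hsubxs le_rfl hb1p' hb2p', ← hNReq]
    exact hptwise _ le_rfl
  funext j
  simp only [vtr]; delta nv
  rcases Nat.lt_or_ge (j : ℕ) (Nat.count (vpred c t x) (t+1)) with hj | hj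
  · have hj' : (j : ℕ) < Nat.count (vpred c t (x+s)) (t+1) := by omega
    rw [if_pos hj', if_pos hj]
    set u := Nat.nth (vpred c t x) (j : ℕ) with hu
    have hvu : vpred c t x u := bnd_mem vpred_t hj
    have hRu : rpred c t ε p u := hsubx u hvu
    have hk0lt : Nat.count (rpred c t ε p) u < Nat.count (rpred c t ε p) (t+1) :=
      bnd_count_lt rpred_t hRu
    have hk0lt' : Nat.count (rpred c t ε p) u < Nat.count (rpred c t ε p') (t+1) := by
      rw [← hNReq]; exact hk0lt
    have hnthu : Nat.nth (rpred c t ε p) (Nat.count (rpred c t ε p) u) = u :=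
      Nat.nth_count hRu
    obtain ⟨hstk, hhdk, _⟩ := (main (Nat.count (rpred c t ε p) u)).2 hk0lt hk0lt'
    have hvu' : vpred c t (x+s) (Nat.nth (rpred c t ε p') (Nat.count (rpred c t ε p) u)) := by
      refine ⟨(bnd_mem rpred_t hk0lt').1, ?_⟩
      rw [hhdk, hnthu, hvu.2]
    have hcju : Nat.count (vpred c t x) u =
        ((Finset.range (Nat.count (rpred c t ε p) u)).filter
          (fun k => vpred c t x (Nat.nth (rpred c t ε p) k))).card := by
      apply count_eq_index_card (t := t) rpred_t hsubx (le_of_lt hk0lt)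
      · intro v hv hvu2
        have h12 : Nat.nth (rpred c t ε p) (Nat.count (rpred c t ε p) v) = v :=
          Nat.nth_count hv
        apply bnd_rev_lt (t := t) rpred_t
        · rw [h12, hnthu]; exact hvu2
        · exact bnd_count_lt rpred_t hv
      · intro k hk
        have := bnd_lt (t := t) rpred_t hk hk0lt
        rw [hnthu] at this
        exact this
    have hnthu' : Nat.nth (rpred c t ε p') (Nat.count (rpred c t ε p') (Nat.nth (rpred c t ε p')
        (Nat.count (rpred c t ε p) u))) = Nat.nth (rpred c t ε p') (Nat.count (rpred c t ε p) u) :=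
      Nat.nth_count (bnd_mem rpred_t hk0lt')
    have hcnu' : Nat.count (rpred c t ε p') (Nat.nth (rpred c t ε p')
        (Nat.count (rpred c t ε p) u)) = Nat.count (rpred c t ε p) u :=
      bnd_count_nth rpred_t hk0lt'
    have hcju' : Nat.count (vpred c t (x+s)) (Nat.nth (rpred c t ε p')
        (Nat.count (rpred c t ε p) u)) =
        ((Finset.range (Nat.count (rpred c t ε p) u)).filter
          (fun k => vpred c t (x+s) (Nat.nth (rpred c t ε p') k))).card := by
      apply count_eq_index_card (t := t) rpred_t hsubxs (le_of_lt hk0lt')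
      · intro v hv hvu2
        have h12 : Nat.nth (rpred c t ε p') (Nat.count (rpred c t ε p') v) = v :=
          Nat.nth_count hv
        apply bnd_rev_lt (t := t) rpred_t (k' := Nat.count (rpred c t ε p) u)
        · rw [h12]; exact hvu2
        · exact bnd_count_lt rpred_t hv
      · intro k hk
        exact bnd_lt (t := t) rpred_t hk hk0lt'
    have hcount' : Nat.count (vpred c t (x+s)) (Nat.nth (rpred c t ε p')
        (Nat.count (rpred c t ε p) u)) = (j : ℕ) := by
      rw [hcju', ← hptwise _ (le_of_lt hk0lt), ← hcju]
      exact bnd_count_nth vpred_t hj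
    have hnthx : Nat.nth (vpred c t (x+s)) (j : ℕ) =
        Nat.nth (rpred c t ε p') (Nat.count (rpred c t ε p) u) := by
      have h13 := Nat.nth_count hvu'
      rw [hcount'] at h13
      exact h13
    rw [hnthx]
    rw [hnthu] at hstk
    exact congrArg _ hstk.symm
  · have h1 : ¬ ((j : ℕ) < Nat.count (vpred c t (x+s)) (t+1)) := by omega
    have h2 : ¬ ((j : ℕ) < Nat.count (vpred c t x) (t+1)) := by omega
    rw [if_neg h1, if_neg h2]

end DTM

end AuxWR4

section AuxWR5

attribute [local instance] Classical.propDecidable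

open Finset

namespace DTM

variable {A Q Γ : Type*} {M : DTM A Q Γ} {w : List A} {c : ℕ → TMCfg Q Γ} {t : ℕ}

lemma ctx_nv_le [Fintype Γ] (hc : ∀ m ≤ t, M.run w m = some (c m))
    {ltr : Γ → Γ → Prop} (hδw : ∀ p σ q τ d, M.δ p σ = some (q, τ, d) → ltr τ σ)
    (htr : Transitive ltr) (hir : ∀ γ : Γ, ¬ ltr γ γ) (x : ℤ) :
    nv c t x ≤ Fintype.card Γ := by
  have h1 : Nat.count (vpred c t x) (t+1) =
      ((Finset.range (t+1)).filter (fun m => (c m).head = x)).card := by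
    rw [Nat.count_eq_card_filter_range]
    congr 1
    apply Finset.filter_congr
    intro m hm
    simp only [Finset.mem_range] at hm
    constructor
    · rintro ⟨_, h⟩; exact h
    · intro h; exact ⟨by omega, h⟩
  show Nat.count (vpred c t x) (t+1) ≤ _
  rw [h1]
  exact ctx_visit_card hc hδw htr hir x

lemma ctx_no_two (hc : ∀ m ≤ t, M.run w m = some (c m)) (hlast : M.run w (t+1) = none)
    {g : ℕ} (hg : ∀ x : ℤ, nv c t x ≤ g)
    {ε : ℤ} (hε : ε = 1 ∨ ε = -1) {p p' : ℤ}
    (hp : 1 ≤ ε * p) (hp' : 1 ≤ ε * p')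
    (hbl : ∀ x, ε * p ≤ ε * x → M.initTape w x = M.blank)
    (hbl' : ∀ x, ε * p' ≤ ε * x → M.initTape w x = M.blank)
    (hne : p ≠ p') (hvis : 0 < nv c t p) (hvt : vtr c t g p = vtr c t g p') : False := by
  have hε0 : ε ≠ 0 := by rcases hε with rfl | rfl <;> norm_num
  have key : ∀ pa pb : ℤ, 1 ≤ ε * pa → 1 ≤ ε * pb →
      (∀ x, ε * pa ≤ ε * x → M.initTape w x = M.blank) →
      (∀ x, ε * pb ≤ ε * x → M.initTape w x = M.blank) →
      1 ≤ ε * (pb - pa) → 0 < nv c t pa → vtr c t g pa = vtr c t g pb → False := by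
    intro pa pb hpa hpb hbla hblb hd hnva hveq
    have hsim := ctx_sim hc hlast hg hε hpa hpb hbla hblb hveq
    have iter : ∀ k : ℕ, vtr c t g (pa + k * (pb - pa)) = vtr c t g pa ∧
        ε * pa + k ≤ ε * (pa + k * (pb - pa)) := by
      intro k
      induction k with
      | zero => constructor <;> simp
      | succ k ih =>
        have hk0 : (0:ℤ) ≤ (k:ℤ) := Int.natCast_nonneg k
        have hreg : ε * pa ≤ ε * (pa + (k:ℤ) * (pb - pa)) := by linarith [ih.2]
        have h1 := hsim _ hreg
        have hcast : ((k+1 : ℕ) : ℤ) = (k : ℤ) + 1 := by push_cast; ring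
        constructor
        · have h2 : pa + (k:ℤ) * (pb - pa) + (pb - pa) = pa + ((k:ℤ) + 1) * (pb - pa) := by
            ring
          rw [hcast, ← h2, h1, ih.1]
        · have h3 : ε * (pa + ((k:ℤ)+1) * (pb - pa)) =
              ε * (pa + (k:ℤ) * (pb - pa)) + ε * (pb - pa) := by ring
          rw [hcast]
          linarith [ih.2]
    obtain ⟨hvt2, hge⟩ := iter (t+1)
    have hnvx : 0 < nv c t (pa + ((t+1 : ℕ):ℤ) * (pb - pa)) := by
      rw [vtr_eq_count (hg _) (hg _) hvt2]
      exact hnva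
    have hvv := bnd_mem (t := t) vpred_t hnvx
    obtain ⟨hmt, hhd⟩ := hvv
    have habs := ctx_headabs hc _ hmt
    rw [hhd] at habs
    have habs2 : (pa + ((t+1 : ℕ):ℤ) * (pb - pa)).natAbs ≤ t := le_trans habs hmt
    rcases hε with rfl | rfl <;> omega
  rcases lt_trichotomy (ε * (p' - p)) 0 with h | h | h
  · have hd : 1 ≤ ε * (p - p') := by
      have h2 : ε * (p - p') = -(ε * (p' - p)) := by ring
      omega
    have hvis' : 0 < nv c t p' := by
      rw [← vtr_eq_count (hg p) (hg p') hvt]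
      exact hvis
    exact key p' p hp' hp hbl' hbl hd hvis' hvt.symm
  · rcases mul_eq_zero.mp h with h2 | h2
    · exact hε0 h2
    · exact hne (by omega)
  · exact key p p' hp hp' hbl hbl' (by omega) hvis hvt

lemma halt_case [Fintype Q] [Fintype Γ] (M : DTM A Q Γ) (w : List A)
    {ltr : Γ → Γ → Prop}
    (hδw : ∀ p σ q τ d, M.δ p σ = some (q, τ, d) → ltr τ σ)
    (htr : Transitive ltr) (hir : ∀ γ : Γ, ¬ ltr γ γ)
    (t : ℕ) (ht : (M.run w t).isSome) (hlast : M.run w (t+1) = none) :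
    t ≤ Fintype.card Γ * w.length +
        Fintype.card Γ * (2 * Fintype.card (Fin (Fintype.card Γ) → Option Q) + 1) ∧
    {i : ℤ | (i < 0 ∨ (w.length : ℤ) ≤ i) ∧ (M.visits w i).Nonempty}.ncard ≤
      2 * Fintype.card (Fin (Fintype.card Γ) → Option Q) + 1 := by
  set B := Fintype.card (Fin (Fintype.card Γ) → Option Q) with hB
  set c : ℕ → TMCfg Q Γ := fun m => (M.run w m).getD (M.initCfg w) with hcdef
  have hc : ∀ m ≤ t, M.run w m = some (c m) := by
    intro m hm
    cases hrm : M.run w m with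
    | none =>
      exfalso
      have h2 := run_none_mono M w hm hrm
      rw [h2] at ht
      simp at ht
    | some d => rw [hcdef]; simp [hrm]
  have hg : ∀ x : ℤ, nv c t x ≤ Fintype.card Γ := ctx_nv_le hc hδw htr hir
  have hvisit : ∀ i : ℤ, (M.visits w i).Nonempty → ∃ m, m ≤ t ∧ (c m).head = i := by
    rintro i ⟨n, d, hrd, hhd⟩
    have hnt : n ≤ t := by
      by_contra hgt
      have h2 := run_none_mono M w (show t+1 ≤ n by omega) hlast
      rw [h2] at hrd
      exact nomatch hrd
    refine ⟨n, hnt, ?_⟩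
    have h3 := hc n hnt
    rw [hrd] at h3
    rw [← Option.some_inj.mp h3]
    exact hhd
  have hnvpos : ∀ i : ℤ, (∃ m, m ≤ t ∧ (c m).head = i) → 0 < nv c t i := by
    rintro i ⟨m, hmt, hhd⟩
    exact count_pos_of_mem vpred_t ⟨hmt, hhd⟩
  set Vis : Finset ℤ := (Finset.range (t+1)).image (fun m => (c m).head) with hVis
  have hmemVis : ∀ i, i ∈ Vis → ∃ m, m ≤ t ∧ (c m).head = i := by
    intro i hi
    obtain ⟨m, hm, hhd⟩ := Finset.mem_image.mp hi
    exact ⟨m, by simpa [Nat.lt_succ_iff] using Finset.mem_range.mp hm, hhd⟩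
  have hbl_left : ∀ i : ℤ, i < 0 → ∀ x : ℤ, (-1) * i ≤ (-1) * x → M.initTape w x = M.blank := by
    intro i hi x hx
    have hx0 : ¬ (0 ≤ x) := by omega
    show (if 0 ≤ x then (w.map M.embed).getD x.toNat M.blank else M.blank) = M.blank
    rw [if_neg hx0]
  have hbl_right : ∀ i : ℤ, (w.length:ℤ) ≤ i → 1 ≤ i →
      ∀ x : ℤ, 1 * i ≤ 1 * x → M.initTape w x = M.blank := by
    intro i hi hi1 x hx
    have hwnn : (0:ℤ) ≤ (w.length:ℤ) := Int.natCast_nonneg _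
    have hx0 : (0:ℤ) ≤ x := by omega
    show (if 0 ≤ x then (w.map M.embed).getD x.toNat M.blank else M.blank) = M.blank
    rw [if_pos hx0]
    apply List.getD_eq_default
    rw [List.length_map]
    omega
  set F1 : Finset ℤ := Vis.filter (fun i => i < 0) with hF1
  set F2 : Finset ℤ := Vis.filter (fun i => (w.length:ℤ) ≤ i ∧ 1 ≤ i) with hF2
  have hcard1 : F1.card ≤ B := by
    rw [hB, ← Finset.card_univ]
    apply Finset.card_le_card_of_injOn (vtr c t (Fintype.card Γ)) (fun _ _ => Finset.mem_univ _)
    intro i hi i' hi' he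
    rw [Finset.mem_coe, hF1, Finset.mem_filter] at hi hi'
    by_contra hne
    exact ctx_no_two hc hlast hg (Or.inr rfl) (by omega) (by omega)
      (hbl_left i hi.2) (hbl_left i' hi'.2) hne (hnvpos i (hmemVis i hi.1)) he
  have hcard2 : F2.card ≤ B := by
    rw [hB, ← Finset.card_univ]
    apply Finset.card_le_card_of_injOn (vtr c t (Fintype.card Γ)) (fun _ _ => Finset.mem_univ _)
    intro i hi i' hi' he
    rw [Finset.mem_coe, hF2, Finset.mem_filter] at hi hi'
    by_contra hne
    exact ctx_no_two hc hlast hg (Or.inl rfl) (by omega) (by omega)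
      (hbl_right i hi.2.1 hi.2.2) (hbl_right i' hi'.2.1 hi'.2.2) hne
      (hnvpos i (hmemVis i hi.1)) he
  set Fblank : Finset ℤ := Vis.filter (fun i => i < 0 ∨ (w.length:ℤ) ≤ i) with hFb
  have hwnn : (0:ℤ) ≤ (w.length:ℤ) := Int.natCast_nonneg _
  have hsplit : Fblank ⊆ F1 ∪ F2 ∪ {0} := by
    intro i hi
    rw [hFb, Finset.mem_filter] at hi
    rcases hi.2 with h | h
    · exact Finset.mem_union_left _ (Finset.mem_union_left _
        (by rw [hF1, Finset.mem_filter]; exact ⟨hi.1, h⟩))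
    · by_cases h1 : 1 ≤ i
      · exact Finset.mem_union_left _ (Finset.mem_union_right _
          (by rw [hF2, Finset.mem_filter]; exact ⟨hi.1, h, h1⟩))
      · have h0 : i = 0 := by omega
        exact Finset.mem_union_right _ (by simp [h0])
  have hcardF : Fblank.card ≤ 2 * B + 1 := by
    have h1 := Finset.card_le_card hsplit
    have h2 := Finset.card_union_le (F1 ∪ F2) ({0} : Finset ℤ)
    have h3 := Finset.card_union_le F1 F2
    have h4 : ({0} : Finset ℤ).card = 1 := rfl
    omega
  constructor
  · -- time bound
    have h1 : (Finset.range (t+1)).card ≤ Fintype.card Γ * Vis.card := by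
      rw [hVis]
      apply Finset.card_le_mul_card_image
      intro a _
      have h5 := ctx_visit_card hc hδw htr hir a
      exact h5
    have h2 : Vis ⊆ Fblank ∪ Finset.Ico (0:ℤ) (w.length:ℤ) := by
      intro i hi
      by_cases hb : i < 0 ∨ (w.length:ℤ) ≤ i
      · exact Finset.mem_union_left _ (by rw [hFb, Finset.mem_filter]; exact ⟨hi, hb⟩)
      · push_neg at hb
        exact Finset.mem_union_right _ (Finset.mem_Ico.mpr ⟨by omega, by omega⟩)
    have h3 : Vis.card ≤ Fblank.card + w.length := by
      have h6 := Finset.card_le_card h2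
      have h7 := Finset.card_union_le Fblank (Finset.Ico (0:ℤ) (w.length:ℤ))
      have h8 : (Finset.Ico (0:ℤ) (w.length:ℤ)).card = w.length := by
        rw [Int.card_Ico]
        omega
      omega
    rw [Finset.card_range] at h1
    have h9 : Fintype.card Γ * Vis.card ≤ Fintype.card Γ * ((2*B+1) + w.length) :=
      Nat.mul_le_mul_left _ (by omega)
    have h10 : Fintype.card Γ * ((2*B+1) + w.length) =
        Fintype.card Γ * w.length + Fintype.card Γ * (2*B+1) := by ring
    omega
  · -- ncard bound
    have hsub2 : {i : ℤ | (i < 0 ∨ (w.length:ℤ) ≤ i) ∧ (M.visits w i).Nonempty} ⊆ ↑Fblank := by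
      intro i hi
      obtain ⟨m, hmt, hhd⟩ := hvisit i hi.2
      rw [Finset.mem_coe, hFb, Finset.mem_filter]
      refine ⟨?_, hi.1⟩
      rw [hVis]
      exact Finset.mem_image.mpr ⟨m, Finset.mem_range.mpr (by omega), hhd⟩
    have h11 := Set.ncard_le_ncard hsub2 Fblank.finite_toSet
    rw [Set.ncard_coe_finset] at h11
    omega

end DTM

end AuxWR5

/-- Dichotomy of computations of a weight-reducing DTM `M`: there are
constants `C`, `K`, `D` (depending only on `M`) such that each computation
either is infinite and visits infinitely many tape cells, or is finite, has
length linearly bounded in the input length, and visits at most `C`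
initially-blank cells. -/
theorem stmt16 {A Q Γ : Type*} [Fintype Q] [Fintype Γ] (M : DTM A Q Γ)
    (hwr : M.WeightReducing) :
    ∃ C K D : ℕ, ∀ w : List A,
      (M.InfiniteOn w ∧ {i : ℤ | (M.visits w i).Nonempty}.Infinite) ∨
      (∃ t : ℕ, (M.run w t).isSome ∧ M.run w (t + 1) = none ∧
        t ≤ K * w.length + D ∧
        {i : ℤ | (i < 0 ∨ (w.length : ℤ) ≤ i) ∧
          (M.visits w i).Nonempty}.ncard ≤ C) := by
    classical
  obtain ⟨ltr, hso, hδw⟩ := hwr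
  have htr : Transitive ltr := fun a b c hab hbc => hso.toIsTrans.trans a b c hab hbc
  have hir : ∀ γ : Γ, ¬ ltr γ γ := fun γ => hso.toIrrefl.irrefl γ
  refine ⟨2 * Fintype.card (Fin (Fintype.card Γ) → Option Q) + 1, Fintype.card Γ,
    Fintype.card Γ * (2 * Fintype.card (Fin (Fintype.card Γ) → Option Q) + 1), ?_⟩
  intro w
  by_cases hinf : M.InfiniteOn w
  · left
    refine ⟨hinf, ?_⟩
    by_contra hfin
    rw [Set.not_infinite] at hfin
    set c : ℕ → TMCfg Q Γ := fun m => (M.run w m).getD (M.initCfg w) with hcdef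
    have hc : ∀ T : ℕ, ∀ m ≤ T, M.run w m = some (c m) := by
      intro T m _
      have h1 := hinf m
      cases hrm : M.run w m with
      | none => rw [hrm] at h1; simp at h1
      | some d => rw [hcdef]; simp [hrm]
    set sF := hfin.toFinset with hsF
    set N := Fintype.card Γ * sF.card + 1 with hN
    have himg : ((Finset.range (N+1)).image (fun m => (c m).head)) ⊆ sF := by
      intro i hi
      obtain ⟨m, hm, hhd⟩ := Finset.mem_image.mp hi
      have hm2 : m ≤ N := Nat.lt_succ_iff.mp (Finset.mem_range.mp hm)
      rw [hsF, Set.Finite.mem_toFinset]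
      exact ⟨m, c m, hc N m hm2, hhd⟩
    have h1 := Finset.card_le_mul_card_image (f := fun m => (c m).head)
      (Finset.range (N+1)) (Fintype.card Γ)
      (fun a _ => DTM.ctx_visit_card (t := N) (hc N) hδw htr hir a)
    have h2 : ((Finset.range (N+1)).image fun m => (c m).head).card ≤ sF.card :=
      Finset.card_le_card himg
    rw [Finset.card_range] at h1
    have h3 : N + 1 ≤ Fintype.card Γ * sF.card :=
      le_trans h1 (Nat.mul_le_mul_left _ h2)
    omega
  · right
    have hex : ∃ n, M.run w n = none := by
      by_contra hno
      push_neg at hno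
      apply hinf
      intro n
      cases hrn : M.run w n with
      | none => exact absurd hrn (hno n)
      | some d => simp
    have hn0 : M.run w (Nat.find hex) = none := Nat.find_spec hex
    have hpos : 0 < Nat.find hex := by
      rcases Nat.eq_zero_or_pos (Nat.find hex) with h | h
      · rw [h] at hn0
        exact absurd hn0 (by rw [show M.run w 0 = some (M.initCfg w) from rfl]; simp)
      · exact h
    set t := Nat.find hex - 1 with htdef
    have ht1 : M.run w (t+1) = none := by
      rw [show t+1 = Nat.find hex by omega]
      exact hn0
    have ht2 : (M.run w t).isSome := by
      cases hrt : M.run w t with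
      | none => exact absurd hrt (Nat.find_min hex (by omega))
      | some d => simp
    obtain ⟨hlen, hncard⟩ := DTM.halt_case M w hδw htr hir t ht2 ht1
    exact ⟨t, ht2, ht1, hlen, hncard⟩
end
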